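/- arXiv:2106.11438 — 4 statements merged into one kernel-verified Lean document; each statement's English description precedes it below -/
import Mathlib

section
/- Let R be a probability distribution supported on a ball of radius r in ℝⁿ, let x* ~ R, and let y = Ax* + ξ where A ∈ ℝ^{m×n} is any fixed (deterministic) matrix and ξ ~ N(0, (σ²/m)I_m). Assume δ < 0.1. If there exists a recovery scheme that takes (y, A) as input and outputs x̂ with ‖x̂ − x*‖ ≤ O(η) with probability at least 1 − δ, then m ≥ (0.15 / log(1 + m r² ‖A‖_∞² / σ²)) · ( log cov_{3η, 4δ}(R) + log(6δ) − O(1) ). -/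
open MeasureTheory ProbabilityTheory ENNReal
open scoped NNReal

noncomputable section

/-- `ℝⁿ` with the `ℓ₂` norm. -/
abbrev EucSp (n : ℕ) : Type := EuclideanSpace ℝ (Fin n)

/-- `m × n` real matrices, as functions (so that the product measurable structure is found). -/
abbrev MatR (m n : ℕ) : Type := Fin m → Fin n → ℝ

/-- The `(η, δ)`-approximate covering number of a measure `R` on `ℝⁿ`: the least number of
closed `ℓ₂`-balls of radius `η` whose union has `R`-mass at least `1 - δ`. -/
def covNum {n : ℕ} (R : Measure (EucSp n)) (η δ : ℝ) : ℕ :=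
  sInf {k : ℕ | ∃ s : Finset (EucSp n), s.card = k ∧
    ENNReal.ofReal (1 - δ) ≤ R (⋃ x ∈ s, Metric.closedBall x η)}

/-- `γ` is a coupling of `μ` and `ν`. -/
def IsCoupling {α : Type*} [MeasurableSpace α] (γ : Measure (α × α)) (μ ν : Measure α) : Prop :=
  γ.map Prod.fst = μ ∧ γ.map Prod.snd = ν

/-- Wasserstein-`p` distance. -/
def wassDist {α : Type*} [MeasurableSpace α] [NormedAddCommGroup α]
    (p : ℝ) (μ ν : Measure α) : ℝ≥0∞ :=
  ⨅ γ ∈ {γ : Measure (α × α) | IsCoupling γ μ ν},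
    (∫⁻ z, ENNReal.ofReal (‖z.1 - z.2‖ ^ p) ∂γ) ^ (1 / p)

/-- Wasserstein-`∞` distance. -/
def wassInf {α : Type*} [MeasurableSpace α] [NormedAddCommGroup α]
    (μ ν : Measure α) : ℝ≥0∞ :=
  ⨅ γ ∈ {γ : Measure (α × α) | IsCoupling γ μ ν},
    essSup (fun z => ENNReal.ofReal ‖z.1 - z.2‖) γ

/-- Total variation distance between two measures. -/
def tvDist {α : Type*} [MeasurableSpace α] (μ ν : Measure α) : ℝ :=
  ⨆ s : {s : Set α // MeasurableSet s}, ((μ s.1).toReal - (ν s.1).toReal)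

open Classical in
/-- Kullback-Leibler divergence (natural log), `∞` if not absolutely continuous/integrable. -/
def klDivE {α : Type*} [MeasurableSpace α] (μ ν : Measure α) : ℝ≥0∞ :=
  if μ ≪ ν ∧ Integrable (fun x => Real.log (μ.rnDeriv ν x).toReal) μ
  then ENNReal.ofReal (∫ x, Real.log (μ.rnDeriv ν x).toReal ∂μ) else ⊤

/-- Shannon mutual information (in nats) between the two coordinates of a joint law. -/
def mutualInfoE {α β : Type*} [MeasurableSpace α] [MeasurableSpace β]
    (μ : Measure (α × β)) : ℝ≥0∞ :=
  klDivE μ ((μ.map Prod.fst).prod (μ.map Prod.snd))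

/-- Mutual information in bits. -/
def mutualInfoBits {α β : Type*} [MeasurableSpace α] [MeasurableSpace β]
    (μ : Measure (α × β)) : ℝ≥0∞ :=
  mutualInfoE μ / ENNReal.ofReal (Real.log 2)

/-- Standard product Gaussian `N(0, v I_m)` on `ℝᵐ` (with the `ℓ₂` structure). -/
def gaussianVec (m : ℕ) (v : ℝ≥0) : Measure (EucSp m) :=
  (Measure.pi fun _ : Fin m => gaussianReal 0 v).map
    (⇑(EuclideanSpace.equiv (Fin m) ℝ).symm)

/-- Law of an `m × n` random matrix with i.i.d. `N(0, 1/m)` entries. -/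
def gaussMatrix (m n : ℕ) : Measure (MatR m n) :=
  Measure.pi fun _ : Fin m => Measure.pi fun _ : Fin n => gaussianReal 0 ((m : ℝ≥0)⁻¹)

/-- Apply a matrix to a vector of `ℝⁿ`, landing in `ℝᵐ` (`ℓ₂` structure on both sides). -/
def applyMat {m n : ℕ} (A : MatR m n) (x : EucSp n) : EucSp m :=
  (EuclideanSpace.equiv (Fin m) ℝ).symm
    (fun i => ∑ j, A i j * (EuclideanSpace.equiv (Fin n) ℝ) x j)

/-- Maximum `ℓ₂` norm of a row of `A`. -/
def maxRowNorm {m n : ℕ} (A : MatR m n) : ℝ :=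
  ⨆ i : Fin m, Real.sqrt (∑ j, (A i j) ^ 2)

/-- Joint law of `(x⋆, y)` where `x⋆ ∼ P` and `y = A x⋆ + ξ`,
`ξ ∼ N(0, (σ²/m) I_m)` independent of `x⋆`. -/
def jointXY {m n : ℕ} (P : Measure (EucSp n)) (A : MatR m n)
    (σ : ℝ) : Measure (EucSp n × EucSp m) :=
  (P.prod (gaussianVec m (Real.toNNReal (σ ^ 2 / m)))).map
    (fun p => (p.1, applyMat A p.1 + p.2))

/-- Joint law of `(y, x⋆)`. -/
def jointYX {m n : ℕ} (P : Measure (EucSp n)) (A : MatR m n)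
    (σ : ℝ) : Measure (EucSp m × EucSp n) :=
  (jointXY P A σ).map Prod.swap

/-- Law of the observation `y` alone. -/
def obsDist {m n : ℕ} (P : Measure (EucSp n)) (A : MatR m n)
    (σ : ℝ) : Measure (EucSp m) :=
  (jointXY P A σ).map Prod.snd

/-- `κ` is (a version of) the posterior/conditional distribution of the second coordinate given
the first, for the joint law `ρ`.  Sampling from `κ y` is posterior sampling. -/
def IsPosterior {α β : Type*} [MeasurableSpace α] [MeasurableSpace β]
    (ρ : Measure (α × β)) (κ : Kernel α β) : Prop :=
  IsMarkovKernel κ ∧ ∀ s t : Set _, MeasurableSet s → MeasurableSet t →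
    ρ (s ×ˢ t) = ∫⁻ y in s, κ y t ∂(ρ.map Prod.fst)


namespace CSLB

section
open Real

/-- Product of coordinate functions integrates to product of integrals over a pi measure. -/
theorem lintegral_pi_prod : ∀ (m : ℕ) (μ : Fin m → Measure ℝ), (∀ i, SigmaFinite (μ i)) →
    ∀ (f : Fin m → ℝ → ℝ≥0∞), (∀ i, Measurable (f i)) →
    ∫⁻ x, ∏ i, f i (x i) ∂(Measure.pi μ) = ∏ i, ∫⁻ t, f i t ∂(μ i) := by
  intro m
  induction m with
  | zero =>
    intro μ _ f _
    simp [Measure.pi_univ]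
  | succ N ih =>
    intro μ hσ f hf
    have MP := measurePreserving_piFinSuccAbove μ 0
    have hG : Measurable fun z : ℝ × (Fin N → ℝ) =>
        f 0 z.1 * ∏ j : Fin N, f (Fin.succ j) (z.2 j) := by
      refine ((hf 0).comp measurable_fst).mul ?_
      exact Finset.measurable_prod _ fun j _ =>
        (hf _).comp ((measurable_pi_apply j).comp measurable_snd)
    have key := MP.lintegral_comp hG
    have h1 : ∀ x : Fin (N+1) → ℝ,
        f 0 ((MeasurableEquiv.piFinSuccAbove (fun _ : Fin (N+1) => ℝ) 0) x).1 *
          ∏ j : Fin N, f (Fin.succ j)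
            (((MeasurableEquiv.piFinSuccAbove (fun _ : Fin (N+1) => ℝ) 0) x).2 j)
        = ∏ i, f i (x i) := by
      intro x
      rw [Fin.prod_univ_succ]
      simp [MeasurableEquiv.piFinSuccAbove, Fin.insertNthEquiv, Fin.zero_succAbove, Fin.tail]
    simp only [h1] at key
    rw [key]
    have hmeas2 : Measurable fun w : Fin N → ℝ => ∏ j : Fin N, f (Fin.succ j) (w j) :=
      Finset.measurable_prod _ fun j _ => (hf _).comp (measurable_pi_apply j)
    refine (lintegral_prod_mul (hf 0).aemeasurable hmeas2.aemeasurable).trans ?_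
    have h2 : (fun j : Fin N => μ ((0 : Fin (N+1)).succAbove j)) = fun j => μ (Fin.succ j) := by
      funext j; rw [Fin.zero_succAbove]
    rw [h2, ih _ (fun j => hσ _) _ (fun j => hf _), Fin.prod_univ_succ]

/-- Cauchy-Schwarz style inequality for lintegrals. -/
theorem lintegral_cs {α : Type*} [MeasurableSpace α] (Q : Measure α) (ρ f : α → ℝ≥0∞)
    (hρ : Measurable ρ) (hf : Measurable f) (hf1 : ∀ x, f x ≤ 1) :
    (∫⁻ x, ρ x * f x ∂Q) ^ 2 ≤ (∫⁻ x, f x ∂Q) * ∫⁻ x, (ρ x) ^ 2 ∂Q := by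
  have hhalf : ∀ x : ℝ≥0∞, x ^ ((1:ℝ)/2) * x ^ ((1:ℝ)/2) = x := by
    intro x
    rw [← ENNReal.rpow_add_of_nonneg _ _ (by norm_num) (by norm_num)]
    norm_num
  have h2 : Real.HolderConjugate 2 2 := Real.HolderConjugate.two_two
  have key := ENNReal.lintegral_mul_le_Lp_mul_Lq Q h2
    (f := fun x => (f x) ^ ((1:ℝ)/2)) (g := fun x => (f x) ^ ((1:ℝ)/2) * ρ x)
    (hf.pow_const _).aemeasurable ((hf.pow_const _).mul hρ).aemeasurable
  have e1 : ∀ x, ((f x) ^ ((1:ℝ)/2)) * ((f x) ^ ((1:ℝ)/2) * ρ x) = ρ x * f x := by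
    intro x; rw [← mul_assoc, hhalf, mul_comm]
  have e2 : ∀ x : ℝ≥0∞, (x ^ ((1:ℝ)/2)) ^ (2:ℝ) = x := by
    intro x
    rw [← ENNReal.rpow_mul]
    norm_num
  have enat : ∀ x : ℝ≥0∞, x ^ (2:ℝ) = x ^ (2:ℕ) := by
    intro x
    have h22 : ((2:ℕ):ℝ) = (2:ℝ) := by norm_num
    rw [← h22, ENNReal.rpow_natCast]
  have e3 : ∀ x, ((f x) ^ ((1:ℝ)/2) * ρ x) ^ (2:ℝ) = f x * (ρ x) ^ 2 := by
    intro x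
    rw [ENNReal.mul_rpow_of_nonneg _ _ (by norm_num : (0:ℝ) ≤ 2), e2 (f x), enat]
  simp only [Pi.mul_apply, e1, e2, e3] at key
  have key2 : ∫⁻ x, ρ x * f x ∂Q
      ≤ (∫⁻ x, f x ∂Q) ^ ((1:ℝ)/2) * (∫⁻ x, (ρ x) ^ 2 ∂Q) ^ ((1:ℝ)/2) := by
    refine key.trans (mul_le_mul' le_rfl ?_)
    refine ENNReal.rpow_le_rpow ?_ (by norm_num)
    refine lintegral_mono fun x => ?_
    calc f x * ρ x ^ 2 ≤ 1 * ρ x ^ 2 := mul_le_mul_left (hf1 x) _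
    _ = ρ x ^ 2 := one_mul _
  calc (∫⁻ x, ρ x * f x ∂Q) ^ 2
      ≤ ((∫⁻ x, f x ∂Q) ^ ((1:ℝ)/2) * (∫⁻ x, (ρ x) ^ 2 ∂Q) ^ ((1:ℝ)/2)) ^ 2 := by
        gcongr
    _ = (∫⁻ x, f x ∂Q) * ∫⁻ x, (ρ x) ^ 2 ∂Q := by
        rw [mul_pow, sq, sq, hhalf, hhalf]

lemma gaussian_eq_withDensity_ratio (a b : ℝ) (v s : ℝ≥0) (hv : v ≠ 0) (hs : s ≠ 0) :
    gaussianReal a v = (gaussianReal b s).withDensity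
      (fun t => ENNReal.ofReal (gaussianPDFReal a v t / gaussianPDFReal b s t)) := by
  rw [gaussianReal_of_var_ne_zero _ hv, gaussianReal_of_var_ne_zero _ hs, ← withDensity_mul]
  · congr 1
    funext t
    have hq : 0 < gaussianPDFReal b s t := gaussianPDFReal_pos _ _ _ hs
    rw [Pi.mul_apply, gaussianPDF, gaussianPDF, ← ENNReal.ofReal_mul (gaussianPDFReal_nonneg _ _ _)]
    congr 1
    field_simp
  · exact measurable_gaussianPDF _ _
  · exact ((measurable_gaussianPDFReal _ _).div (measurable_gaussianPDFReal _ _)).ennreal_ofReal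

lemma lintegral_ratio_sq_le (a b : ℝ) (v s : ℝ≥0) (hv : (0:ℝ) < v) (hvs : (v:ℝ) ≤ s)
    (hab : (a - b) ^ 2 ≤ (s:ℝ) - v) :
    ∫⁻ t, (ENNReal.ofReal (gaussianPDFReal a v t / gaussianPDFReal b s t)) ^ 2
      ∂(gaussianReal b s) ≤ ENNReal.ofReal ((s:ℝ) / v) := by
  have hs : (0:ℝ) < s := lt_of_lt_of_le hv hvs
  have hv0 : v ≠ 0 := by
    have : (0:ℝ) < v := hv
    exact_mod_cast this.ne'
  have hs0 : s ≠ 0 := by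
    have : (0:ℝ) < s := hs
    exact_mod_cast this.ne'
  have hw : (0:ℝ) < 2 * (s:ℝ) - v := by linarith
  have hπ : (0:ℝ) < π := Real.pi_pos
  set Vst : ℝ≥0 := Real.toNNReal ((v:ℝ) * s / (2 * (s:ℝ) - v)) with hVst_def
  have hVst : (Vst : ℝ) = (v:ℝ) * s / (2 * (s:ℝ) - v) := Real.coe_toNNReal _ (by positivity)
  have hVst0 : Vst ≠ 0 := by
    rw [← NNReal.coe_ne_zero, hVst]; positivity
  set cst : ℝ := b + 2 * (a - b) * s / (2 * (s:ℝ) - v) with hcst_def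
  set C : ℝ := (s:ℝ) / Real.sqrt ((v:ℝ) * (2 * (s:ℝ) - v))
      * Real.exp ((a - b) ^ 2 / (2 * (s:ℝ) - v)) with hC_def
  have hC0 : 0 ≤ C := by rw [hC_def]; positivity
  -- pointwise identity  p² / q = C ⬝ pdf(cst, Vst)
  have hpoint : ∀ t : ℝ, gaussianPDFReal a v t ^ 2 / gaussianPDFReal b s t
      = C * gaussianPDFReal cst Vst t := by
    intro t
    have hq : 0 < gaussianPDFReal b s t := gaussianPDFReal_pos _ _ _ hs0
    rw [div_eq_iff hq.ne']
    simp only [gaussianPDFReal, hVst]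
    have hexp : (-(t - a) ^ 2 / (2 * (v:ℝ))) + (-(t - a) ^ 2 / (2 * (v:ℝ)))
        = ((a - b) ^ 2 / (2 * (s:ℝ) - v))
          + ((-(t - cst) ^ 2 / (2 * ((v:ℝ) * s / (2 * (s:ℝ) - v))))
            + (-(t - b) ^ 2 / (2 * (s:ℝ)))) := by
      rw [hcst_def]
      field_simp
      ring
    have hXYZ : Real.sqrt ((v:ℝ) * (2 * (s:ℝ) - v))
        * (Real.sqrt (2 * π * ((v:ℝ) * s / (2 * (s:ℝ) - v))) * Real.sqrt (2 * π * (s:ℝ)))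
        = 2 * π * (v:ℝ) * s := by
      rw [← Real.sqrt_mul (by positivity), ← Real.sqrt_mul (by positivity)]
      rw [show (v:ℝ) * (2 * (s:ℝ) - v) * (2 * π * ((v:ℝ) * s / (2 * (s:ℝ) - v)) * (2 * π * (s:ℝ)))
          = (2 * π * (v:ℝ) * s) ^ 2 by field_simp]
      exact Real.sqrt_sq (by positivity)
    have hX : (0:ℝ) < Real.sqrt ((v:ℝ) * (2 * (s:ℝ) - v)) := Real.sqrt_pos.2 (by positivity)
    have hY : (0:ℝ) < Real.sqrt (2 * π * ((v:ℝ) * s / (2 * (s:ℝ) - v))) :=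
      Real.sqrt_pos.2 (by positivity)
    have hZ : (0:ℝ) < Real.sqrt (2 * π * (s:ℝ)) := Real.sqrt_pos.2 (by positivity)
    have hconst : ((Real.sqrt (2 * π * (v:ℝ)))⁻¹) ^ 2
        = (s:ℝ) / Real.sqrt ((v:ℝ) * (2 * (s:ℝ) - v))
          * ((Real.sqrt (2 * π * ((v:ℝ) * s / (2 * (s:ℝ) - v))))⁻¹
              * (Real.sqrt (2 * π * (s:ℝ)))⁻¹) := by
      rw [inv_pow, Real.sq_sqrt (by positivity : (0:ℝ) ≤ 2 * π * (v:ℝ)), div_eq_mul_inv,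
        ← mul_inv, mul_assoc ((s:ℝ)), ← mul_inv, hXYZ]
      rw [eq_comm, mul_inv_eq_iff_eq_mul₀ (by positivity : (2 * π * (v:ℝ) * s) ≠ 0)]
      field_simp
    rw [mul_pow, pow_two (Real.exp _), ← Real.exp_add, hexp, Real.exp_add, Real.exp_add,
      hconst, hC_def]
    ring
  -- C is at most s / v
  have hCle : C ≤ (s:ℝ) / v := by
    have hXpos : (0:ℝ) < Real.sqrt ((v:ℝ) * (2 * (s:ℝ) - v)) := Real.sqrt_pos.2 (by positivity)
    have hmulsqrt : Real.sqrt ((v:ℝ) * (2 * (s:ℝ) - v)) * Real.sqrt ((2 * (s:ℝ) - v) / v)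
        = 2 * (s:ℝ) - v := by
      rw [← Real.sqrt_mul (by positivity)]
      rw [show (v:ℝ) * (2 * (s:ℝ) - v) * ((2 * (s:ℝ) - v) / v) = (2 * (s:ℝ) - v) ^ 2 by
        field_simp]
      exact Real.sqrt_sq hw.le
    have hexple : Real.exp ((a - b) ^ 2 / (2 * (s:ℝ) - v)) ≤ Real.sqrt ((2 * (s:ℝ) - v) / v) := by
      have h1 : Real.exp ((a - b) ^ 2 / (2 * (s:ℝ) - v))
          ≤ Real.exp (((s:ℝ) - v) / (2 * (s:ℝ) - v)) := by
        apply Real.exp_le_exp.2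
        gcongr
      refine h1.trans ?_
      have hXv : (0:ℝ) < (2 * (s:ℝ) - v) / v := by positivity
      have hlog : 1 - ((2 * (s:ℝ) - v) / v)⁻¹ ≤ Real.log ((2 * (s:ℝ) - v) / v) := by
        have := Real.log_le_sub_one_of_pos (inv_pos.2 hXv)
        rw [Real.log_inv] at this
        linarith
      have h2u : 2 * (((s:ℝ) - v) / (2 * (s:ℝ) - v)) = 1 - ((2 * (s:ℝ) - v) / v)⁻¹ := by
        rw [inv_div]
        field_simp
        ring
      have hexp2 : Real.exp (((s:ℝ) - v) / (2 * (s:ℝ) - v)) ^ 2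
          ≤ (2 * (s:ℝ) - v) / v := by
        rw [← Real.exp_nat_mul]
        push_cast
        rw [h2u]
        calc Real.exp (1 - ((2 * (s:ℝ) - v) / v)⁻¹)
            ≤ Real.exp (Real.log ((2 * (s:ℝ) - v) / v)) := Real.exp_le_exp.2 hlog
          _ = (2 * (s:ℝ) - v) / v := Real.exp_log hXv
      exact (Real.le_sqrt (Real.exp_nonneg _) (by positivity)).2 hexp2
    calc C ≤ (s:ℝ) / Real.sqrt ((v:ℝ) * (2 * (s:ℝ) - v)) * Real.sqrt ((2 * (s:ℝ) - v) / v) := by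
          rw [hC_def]
          exact mul_le_mul_of_nonneg_left hexple (by positivity)
      _ = (s:ℝ) / v := by
          rw [show Real.sqrt ((2 * (s:ℝ) - v) / v)
              = (2 * (s:ℝ) - v) / Real.sqrt ((v:ℝ) * (2 * (s:ℝ) - v)) by
            rw [eq_div_iff hXpos.ne', mul_comm]; exact hmulsqrt]
          rw [div_mul_div_comm, Real.mul_self_sqrt (by positivity : (0:ℝ) ≤ (v:ℝ) * (2 * (s:ℝ) - v))]
          have hvne : (v:ℝ) ≠ 0 := hv.ne'
          rw [mul_div_mul_right _ _ hw.ne']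
  -- compute the integral
  have hmeasρ : Measurable fun t => ENNReal.ofReal (gaussianPDFReal a v t / gaussianPDFReal b s t) :=
    ((measurable_gaussianPDFReal _ _).div (measurable_gaussianPDFReal _ _)).ennreal_ofReal
  rw [gaussianReal_of_var_ne_zero _ hs0,
    lintegral_withDensity_eq_lintegral_mul volume (measurable_gaussianPDF b s) (hmeasρ.pow_const 2)]
  have hpt : ∀ t, (gaussianPDF b s * fun t => (ENNReal.ofReal
        (gaussianPDFReal a v t / gaussianPDFReal b s t)) ^ 2) t
      = ENNReal.ofReal C * gaussianPDF cst Vst t := by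
    intro t
    have hq : 0 < gaussianPDFReal b s t := gaussianPDFReal_pos _ _ _ hs0
    have hp : 0 ≤ gaussianPDFReal a v t := gaussianPDFReal_nonneg _ _ _
    rw [Pi.mul_apply, gaussianPDF, gaussianPDF, ← ENNReal.ofReal_pow (by positivity),
      ← ENNReal.ofReal_mul (gaussianPDFReal_nonneg _ _ _), ← ENNReal.ofReal_mul hC0]
    congr 1
    rw [show gaussianPDFReal b s t * (gaussianPDFReal a v t / gaussianPDFReal b s t) ^ 2
        = gaussianPDFReal a v t ^ 2 / gaussianPDFReal b s t by field_simp]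
    exact hpoint t
  rw [lintegral_congr hpt, lintegral_const_mul _ (measurable_gaussianPDF _ _),
    lintegral_gaussianPDF_eq_one _ hVst0, mul_one]
  exact ENNReal.ofReal_le_ofReal hCle

/-- pi of withDensity is withDensity of products, for probability factors. -/
lemma pi_withDensity_prod {m : ℕ} (μ ν : Fin m → Measure ℝ)
    [∀ i, IsProbabilityMeasure (μ i)] [∀ i, IsProbabilityMeasure (ν i)]
    (f : Fin m → ℝ → ℝ≥0∞) (hf : ∀ i, Measurable (f i))
    (heq : ∀ i, ν i = (μ i).withDensity (f i)) :
    Measure.pi ν = (Measure.pi μ).withDensity (fun x => ∏ i, f i (x i)) := by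
  have hprodmeas : Measurable fun x : Fin m → ℝ => ∏ i, f i (x i) :=
    Finset.measurable_prod _ fun i _ => (hf i).comp (measurable_pi_apply i)
  refine Measure.pi_eq fun E hE => ?_
  rw [withDensity_apply _ (MeasurableSet.univ_pi hE)]
  have hind : ∀ x : Fin m → ℝ, (Set.pi Set.univ E).indicator (fun x => ∏ i, f i (x i)) x
      = ∏ i, (E i).indicator (f i) (x i) := by
    intro x
    by_cases hx : x ∈ Set.pi Set.univ E
    · rw [Set.indicator_of_mem hx]
      exact Finset.prod_congr rfl fun i _ =>
        (Set.indicator_of_mem (hx i (Set.mem_univ i)) _).symm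
    · rw [Set.indicator_of_notMem hx]
      have : ∃ i, x i ∉ E i := by
        by_contra hcon
        push_neg at hcon
        exact hx fun i _ => hcon i
      obtain ⟨i, hxi⟩ := this
      exact (Finset.prod_eq_zero (Finset.mem_univ i)
        (Set.indicator_of_notMem hxi _)).symm
  rw [← lintegral_indicator (MeasurableSet.univ_pi hE)]
  rw [lintegral_congr hind]
  rw [lintegral_pi_prod m μ (fun i => inferInstance) _
    (fun i => (hf i).indicator (hE i))]
  refine Finset.prod_congr rfl fun i _ => ?_
  rw [lintegral_indicator (hE i), heq i, withDensity_apply _ (hE i)]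

/-- Existence of a maximal `c`-separated finite subset of a bounded set, which then covers. -/
lemma exists_maximal_separated {n : ℕ} (G : Set (EuclideanSpace ℝ (Fin n)))
    (x₀ : EuclideanSpace ℝ (Fin n)) (r c : ℝ) (hc : 0 < c)
    (hG : G ⊆ Metric.closedBall x₀ r) :
    ∃ S : Finset (EuclideanSpace ℝ (Fin n)), ↑S ⊆ G ∧
      (∀ p ∈ S, ∀ q ∈ S, p ≠ q → c < dist p q) ∧
      G ⊆ ⋃ p ∈ S, Metric.closedBall p c := by
  obtain ⟨t, htfin, htcover⟩ := (Metric.totallyBounded_iff.mp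
    (isCompact_closedBall x₀ r).totallyBounded) (c/2) (by positivity)
  classical
  -- every admissible finset has cardinality at most that of t
  have hbound : ∀ S : Finset (EuclideanSpace ℝ (Fin n)), ↑S ⊆ G →
      (∀ p ∈ S, ∀ q ∈ S, p ≠ q → c < dist p q) → S.card ≤ htfin.toFinset.card := by
    intro S hSG hsep
    have hpick : ∀ p ∈ S, ∃ y ∈ htfin.toFinset, p ∈ Metric.ball y (c/2) := by
      intro p hp
      have : p ∈ ⋃ y ∈ t, Metric.ball y (c/2) := htcover (hG (hSG hp))
      simp only [Set.mem_iUnion, exists_prop] at this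
      obtain ⟨y, hy1, hy2⟩ := this
      exact ⟨y, htfin.mem_toFinset.2 hy1, hy2⟩
    choose φ hφt hφball using hpick
    refine Finset.card_le_card_of_injOn (fun p => if h : p ∈ S then φ p h else x₀) ?_ ?_
    · intro p hp
      show (if h : p ∈ S then φ p h else x₀) ∈ (htfin.toFinset : Set _)
      rw [dif_pos (by simpa using hp)]
      exact hφt p (by simpa using hp)
    · intro p hp q hq hpq
      simp only [Finset.mem_coe] at hp hq
      simp only [hp, hq, dif_pos] at hpq
      by_contra hne
      have h1 := hφball p hp
      have h2 := hφball q hq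
      rw [hpq] at h1
      have : dist p q < c := by
        calc dist p q ≤ dist p (φ q hq) + dist (φ q hq) q := dist_triangle _ _ _
          _ < c/2 + c/2 := by
              rw [Metric.mem_ball] at h1 h2
              rw [dist_comm (φ q hq) q]
              exact add_lt_add h1 h2
          _ = c := by ring
      exact absurd this (not_lt.2 (hsep p hp q hq hne).le)
  -- the set of achievable cardinalities
  set K : Set ℕ := {k | ∃ S : Finset (EuclideanSpace ℝ (Fin n)), ↑S ⊆ G ∧
    (∀ p ∈ S, ∀ q ∈ S, p ≠ q → c < dist p q) ∧ S.card = k} with hK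
  have hKne : K.Nonempty := ⟨0, ∅, by simp, by simp, rfl⟩
  have hKbdd : BddAbove K := by
    refine ⟨htfin.toFinset.card, fun k hk => ?_⟩
    obtain ⟨S, h1, h2, h3⟩ := hk
    exact h3 ▸ hbound S h1 h2
  obtain ⟨S, hSG, hsep, hScard⟩ := Nat.sSup_mem hKne hKbdd
  refine ⟨S, hSG, hsep, ?_⟩
  intro x hxG
  by_contra hxcov
  simp only [Set.mem_iUnion, exists_prop, not_exists, not_and] at hxcov
  have hxS : x ∉ S := by
    intro hxS
    exact hxcov x hxS (Metric.mem_closedBall.2 (by simp [hc.le]))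
  have hfar : ∀ p ∈ S, c < dist x p := by
    intro p hp
    have := hxcov p hp
    rw [Metric.mem_closedBall] at this
    exact lt_of_not_ge this
  have : S.card + 1 ∈ K := by
    refine ⟨insert x S, ?_, ?_, by rw [Finset.card_insert_of_notMem hxS]⟩
    · intro y hy
      rcases Finset.mem_insert.1 hy with h | h
      · exact h ▸ hxG
      · exact hSG h
    · intro p hp q hq hpq
      rcases Finset.mem_insert.1 hp with h1 | h1 <;> rcases Finset.mem_insert.1 hq with h2 | h2
      · exact absurd (h1.trans h2.symm) hpq
      · exact h1 ▸ hfar q h2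
      · rw [dist_comm]; exact h2 ▸ hfar p h1
      · exact hsep p h1 q h2 hpq
  have hle := le_csSup hKbdd this
  rw [hScard] at hle
  omega

end

lemma measurable_applyMat {m n : ℕ} (A : MatR m n) : Measurable (applyMat A) := by
  have he : Measurable (⇑(EuclideanSpace.equiv (Fin n) ℝ)) :=
    (EuclideanSpace.equiv (Fin n) ℝ).continuous.measurable
  have hsym : Measurable (⇑(EuclideanSpace.equiv (Fin m) ℝ).symm) :=
    (EuclideanSpace.equiv (Fin m) ℝ).symm.continuous.measurable
  refine hsym.comp ?_
  refine measurable_pi_lambda _ fun i => ?_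
  exact Finset.measurable_sum _ fun j _ => ((measurable_pi_apply j).comp he).const_mul (A i j)

lemma measurable_dec_ball {m n : ℕ} {γ : Type*} [MeasurableSpace γ]
    (dec : Kernel (EucSp m) (EucSp n)) [IsSFiniteKernel dec] (η : ℝ)
    (T : γ → EucSp m) (hT : Measurable T) (U : γ → EucSp n) (hU : Measurable U) :
    Measurable fun ω => dec (T ω) (Metric.closedBall (U ω) η) := by
  have hSt : MeasurableSet {p : γ × EucSp n | dist p.2 (U p.1) ≤ η} :=
    measurableSet_le (measurable_snd.dist (hU.comp measurable_fst)) measurable_const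
  have h := ProbabilityTheory.Kernel.measurable_kernel_prodMk_left
    (κ := dec.comap T hT) hSt
  have h2 : ∀ ω : γ, (dec.comap T hT) ω
      (Prod.mk ω ⁻¹' {p : γ × EucSp n | dist p.2 (U p.1) ≤ η})
      = dec (T ω) (Metric.closedBall (U ω) η) := by
    intro ω
    rw [ProbabilityTheory.Kernel.comap_apply]
    rfl
  simpa only [h2] using h

set_option maxHeartbeats 2000000 in
/-- The main covering bound. -/
lemma covering_bound {n m : ℕ} (hm : 0 < m) (r σ η δ : ℝ) (x₀ : EucSp n)
    (R : Measure (EucSp n)) (A : MatR m n) (hR : IsProbabilityMeasure R)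
    (hsupp : R (Metric.closedBall x₀ r)ᶜ = 0)
    (hσ : 0 < σ) (hη : 0 < η) (hδ : 0 < δ) (hδ' : δ < 0.1)
    (dec : Kernel (EucSp m) (EucSp n)) (hdec : IsMarkovKernel dec)
    (hsucc : ENNReal.ofReal (1 - δ) ≤
      ∫⁻ q, dec q.2 {z | ‖z - q.1‖ ≤ 1 * η} ∂(jointXY R A σ)) :
    (covNum R (3 * η) (4 * δ) : ℝ)
      ≤ 4 * (1 + m * r ^ 2 * (maxRowNorm A) ^ 2 / σ ^ 2) ^ m := by
  classical
  set e := EuclideanSpace.equiv (Fin m) ℝ with he_def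
  set e' := EuclideanSpace.equiv (Fin n) ℝ with he'_def
  have hesym : Measurable (⇑e.symm) := e.symm.continuous.measurable
  set vN : ℝ≥0 := Real.toNNReal (σ ^ 2 / m) with hvN_def
  have hvN : (vN : ℝ) = σ ^ 2 / m := Real.coe_toNNReal _ (by positivity)
  have hvpos : (0:ℝ) < vN := by rw [hvN]; positivity
  have hvN0 : vN ≠ 0 := by
    have := hvpos.ne'
    exact_mod_cast this
  set B := maxRowNorm A with hB_def
  have hB0 : (0:ℝ) ≤ B := Real.iSup_nonneg fun i => Real.sqrt_nonneg _
  set sN : ℝ≥0 := vN + Real.toNNReal (r ^ 2 * B ^ 2) with hsN_def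
  have hsN : (sN : ℝ) = σ ^ 2 / m + r ^ 2 * B ^ 2 := by
    rw [hsN_def]
    push_cast
    rw [hvN, Real.coe_toNNReal _ (by positivity)]
  have hvs : (vN : ℝ) ≤ sN := by
    rw [hsN, hvN]
    nlinarith [sq_nonneg (r * B)]
  have hspos : (0:ℝ) < sN := lt_of_lt_of_le hvpos hvs
  have hsN0 : sN ≠ 0 := by
    have := hspos.ne'
    exact_mod_cast this
  set Ω : Measure (Fin m → ℝ) := Measure.pi fun _ : Fin m => gaussianReal 0 vN with hΩ_def
  haveI : IsProbabilityMeasure (gaussianVec m vN) := by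
    rw [gaussianVec]
    exact Measure.isProbabilityMeasure_map hesym.aemeasurable
  -- rewrite the success hypothesis
  have hset : ∀ y : EucSp n, {z : EucSp n | ‖z - y‖ ≤ 1 * η} = Metric.closedBall y η := by
    intro y
    ext z
    simp [Metric.mem_closedBall, dist_eq_norm]
  simp only [hset] at hsucc
  have hφ : Measurable fun q : EucSp n × EucSp m => dec q.2 (Metric.closedBall q.1 η) :=
    measurable_dec_ball dec η Prod.snd measurable_snd Prod.fst measurable_fst
  have hTmap : Measurable fun p : EucSp n × EucSp m => (p.1, applyMat A p.1 + p.2) :=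
    measurable_fst.prodMk (((measurable_applyMat A).comp measurable_fst).add measurable_snd)
  rw [jointXY, lintegral_map hφ hTmap] at hsucc
  have hmeas1 : Measurable fun p : EucSp n × EucSp m =>
      dec (applyMat A p.1 + p.2) (Metric.closedBall p.1 η) :=
    measurable_dec_ball dec η _
      (((measurable_applyMat A).comp measurable_fst).add measurable_snd) Prod.fst measurable_fst
  rw [lintegral_prod _ hmeas1.aemeasurable] at hsucc
  set g : EucSp n → ℝ≥0∞ := fun x =>
    ∫⁻ w, dec (applyMat A x + e.symm w) (Metric.closedBall x η) ∂Ω with hg_def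
  have hinner : ∀ x : EucSp n,
      ∫⁻ ξ, dec (applyMat A x + ξ) (Metric.closedBall x η) ∂(gaussianVec m vN) = g x := by
    intro x
    rw [gaussianVec, lintegral_map
      (f := fun ξ : EucSp m => dec (applyMat A x + ξ) (Metric.closedBall x η))
      (measurable_dec_ball dec η (fun ξ => applyMat A x + ξ)
        (measurable_const.add measurable_id) (fun _ => x) measurable_const) hesym]
  rw [lintegral_congr hinner] at hsucc
  -- g is measurable and bounded by 1
  have hgmeas : Measurable g := by
    have huncurry : Measurable fun p : EucSp n × (Fin m → ℝ) =>
        dec (applyMat A p.1 + e.symm p.2) (Metric.closedBall p.1 η) :=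
      measurable_dec_ball dec η _
        (((measurable_applyMat A).comp measurable_fst).add (hesym.comp measurable_snd))
        Prod.fst measurable_fst
    exact huncurry.lintegral_prod_right'
  have hgle : ∀ x, g x ≤ 1 := by
    intro x
    calc g x ≤ ∫⁻ _, 1 ∂Ω := lintegral_mono fun w => prob_le_one
      _ = 1 := by simp
  -- Markov: the set where g < 1/2 has R-measure at most 2δ
  have hbad : R {x | g x < 2⁻¹} ≤ ENNReal.ofReal (2 * δ) := by
    have hsub : {x | g x < 2⁻¹} ⊆ {x | 2⁻¹ ≤ 1 - g x} := by
      intro x hx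
      simp only [Set.mem_setOf_eq] at hx ⊢
      have h1 : g x ≤ 2⁻¹ := hx.le
      have : (1:ℝ≥0∞) - 2⁻¹ ≤ 1 - g x := tsub_le_tsub_left h1 1
      refine le_trans (le_of_eq ?_) this
      rw [← ENNReal.inv_two_add_inv_two, ENNReal.add_sub_cancel_right (by norm_num)]
    refine (measure_mono hsub).trans ?_
    have hmark := mul_meas_ge_le_lintegral (μ := R)
      (f := fun x => 1 - g x) (measurable_const.sub hgmeas) 2⁻¹
    have hint : ∫⁻ x, (1 - g x) ∂(R) ≤ ENNReal.ofReal δ := by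
      rw [lintegral_sub hgmeas (by
          refine ne_top_of_le_ne_top (by norm_num : (1:ℝ≥0∞) ≠ ⊤) ?_
          calc ∫⁻ x, g x ∂(R) ≤ ∫⁻ _, 1 ∂(R) := lintegral_mono hgle
            _ = 1 := by simp)
        (Filter.Eventually.of_forall hgle), lintegral_one, measure_univ]
      calc 1 - ∫⁻ x, g x ∂(R) ≤ 1 - ENNReal.ofReal (1 - δ) := tsub_le_tsub_left hsucc 1
        _ = ENNReal.ofReal δ := by
          rw [← ENNReal.ofReal_one, ← ENNReal.ofReal_sub _ (by linarith)]
          norm_num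
    have h2 : R {x | 2⁻¹ ≤ 1 - g x} ≤ 2 * ∫⁻ x, (1 - g x) ∂(R) := by
      have hh := mul_le_mul_right hmark 2
      rwa [← mul_assoc, ENNReal.mul_inv_cancel (by norm_num) (by norm_num), one_mul] at hh
    calc R {x | 2⁻¹ ≤ 1 - g x} ≤ 2 * ∫⁻ x, (1 - g x) ∂(R) := h2
      _ ≤ 2 * ENNReal.ofReal δ := by gcongr
      _ = ENNReal.ofReal (2 * δ) := by
        rw [ENNReal.ofReal_mul (by norm_num)]
        norm_num
  -- the good set
  set G : Set (EucSp n) := Metric.closedBall x₀ r ∩ {x | 2⁻¹ ≤ g x} with hG_def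
  have hGmeas : MeasurableSet G :=
    measurableSet_closedBall.inter (measurableSet_le measurable_const hgmeas)
  have hGsub : G ⊆ Metric.closedBall x₀ r := Set.inter_subset_left
  have hGmass : ENNReal.ofReal (1 - 4 * δ) ≤ R G := by
    have hcompl : R Gᶜ ≤ ENNReal.ofReal (2 * δ) := by
      rw [hG_def, Set.compl_inter]
      refine (measure_union_le _ _).trans ?_
      rw [hsupp, zero_add]
      refine le_trans (measure_mono ?_) hbad
      intro x hx
      simp only [Set.mem_compl_iff, Set.mem_setOf_eq, not_le] at hx
      exact hx
    have hg1 : R G = 1 - R Gᶜ := by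
      rw [prob_compl_eq_one_sub hGmeas]
      rw [ENNReal.sub_sub_cancel (by norm_num) (prob_le_one)]
    rw [hg1]
    calc ENNReal.ofReal (1 - 4 * δ) ≤ ENNReal.ofReal (1 - 2 * δ) := by
          apply ENNReal.ofReal_le_ofReal; linarith
      _ = 1 - ENNReal.ofReal (2 * δ) := by
          rw [← ENNReal.ofReal_one, ← ENNReal.ofReal_sub _ (by linarith)]
      _ ≤ 1 - R Gᶜ := tsub_le_tsub_left hcompl 1
  -- maximal separated set
  obtain ⟨S, hSG, hsep, hScover⟩ := exists_maximal_separated G x₀ r (3 * η) (by linarith) hGsub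
  -- covNum is at most the cardinality of S
  have hcovS : covNum R (3 * η) (4 * δ) ≤ S.card := by
    apply Nat.sInf_le
    refine ⟨S, rfl, ?_⟩
    exact hGmass.trans (measure_mono hScover)
  -- the reference measure Q
  set cQ : Fin m → ℝ := fun i => ∑ j, A i j * e' x₀ j with hcQ_def
  set Q : Measure (Fin m → ℝ) := Measure.pi fun i => gaussianReal (cQ i) sN with hQ_def
  haveI : IsProbabilityMeasure Q := by rw [hQ_def]; infer_instance
  -- per point estimate
  set X : ℝ≥0∞ := ENNReal.ofReal ((sN:ℝ) / vN) ^ m with hX_def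
  have hX0 : X ≠ 0 := by
    rw [hX_def]
    refine pow_ne_zero _ ?_
    simp only [ne_eq, ENNReal.ofReal_eq_zero, not_le]
    positivity
  have hXtop : X ≠ ⊤ := by
    rw [hX_def]
    exact ENNReal.pow_ne_top ENNReal.ofReal_ne_top
  have hpoint : ∀ p ∈ S, 4⁻¹ * X⁻¹ ≤ ∫⁻ w, dec (e.symm w) (Metric.closedBall p η) ∂Q := by
    intro p hpS
    have hpG : p ∈ G := hSG hpS
    have hgp : (2:ℝ≥0∞)⁻¹ ≤ g p := hpG.2
    have hpball : dist p x₀ ≤ r := Metric.mem_closedBall.1 hpG.1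
    set cP : Fin m → ℝ := fun i => ∑ j, A i j * e' p j with hcP_def
    set F : (Fin m → ℝ) → ℝ≥0∞ := fun w => dec (e.symm w) (Metric.closedBall p η) with hF_def
    have hF : Measurable F :=
      measurable_dec_ball dec η (fun w => e.symm w) hesym (fun _ => p) measurable_const
    have hFle : ∀ w, F w ≤ 1 := fun w => prob_le_one
    -- step 1 : g p as an integral over the shifted pi measure
    have hshift : ∀ w : Fin m → ℝ, applyMat A p + e.symm w = e.symm (fun i => cP i + w i) := by
      intro w
      have : applyMat A p = e.symm cP := rfl
      rw [this, ← map_add]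
      rfl
    have hMP : MeasurePreserving (fun (a : Fin m → ℝ) i => cP i + a i) Ω
        (Measure.pi fun i => gaussianReal (cP i) vN) := by
      refine measurePreserving_pi _ _ fun i => ⟨measurable_id.const_add _, ?_⟩
      rw [gaussianReal_map_const_add, zero_add]
    have hE1 : g p = ∫⁻ w, F w ∂(Measure.pi fun i => gaussianReal (cP i) vN) := by
      rw [hg_def]
      simp only [hshift]
      exact hMP.lintegral_comp hF
    -- step 2 : density between the two pi measures
    set ρ : (Fin m → ℝ) → ℝ≥0∞ := fun x => ∏ i,
      ENNReal.ofReal (gaussianPDFReal (cP i) vN (x i) / gaussianPDFReal (cQ i) sN (x i))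
      with hρ_def
    have hρmeas : Measurable ρ := by
      refine Finset.measurable_prod _ fun i _ => ?_
      exact (((measurable_gaussianPDFReal _ _).div
        (measurable_gaussianPDFReal _ _)).ennreal_ofReal).comp (measurable_pi_apply i)
    have hE2 : (Measure.pi fun i => gaussianReal (cP i) vN) = Q.withDensity ρ := by
      rw [hQ_def, hρ_def]
      exact pi_withDensity_prod (fun i => gaussianReal (cQ i) sN)
        (fun i => gaussianReal (cP i) vN)
        (f := fun i t => ENNReal.ofReal (gaussianPDFReal (cP i) vN t / gaussianPDFReal (cQ i) sN t))
        (fun i => ((measurable_gaussianPDFReal _ _).div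
          (measurable_gaussianPDFReal _ _)).ennreal_ofReal)
        (fun i => gaussian_eq_withDensity_ratio (cP i) (cQ i) vN sN hvN0 hsN0)
    -- step 3 : mean separation bound
    have hmean : ∀ i, (cP i - cQ i) ^ 2 ≤ (sN:ℝ) - vN := by
      intro i
      have hdiff : cP i - cQ i = ∑ j, A i j * (e' p j - e' x₀ j) := by
        rw [hcP_def, hcQ_def, ← Finset.sum_sub_distrib]
        exact Finset.sum_congr rfl fun j _ => by ring
      have hcs := Finset.sum_mul_sq_le_sq_mul_sq Finset.univ
        (fun j => A i j) (fun j => e' p j - e' x₀ j)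
      have hA : (∑ j, (A i j) ^ 2) ≤ B ^ 2 := by
        have h1 : Real.sqrt (∑ j, (A i j) ^ 2) ≤ B := by
          rw [hB_def, maxRowNorm]
          exact le_ciSup (f := fun i : Fin m => Real.sqrt (∑ j, A i j ^ 2))
            (Set.Finite.bddAbove (Set.finite_range _)) i
        calc (∑ j, (A i j) ^ 2) = Real.sqrt (∑ j, (A i j) ^ 2) ^ 2 :=
              (Real.sq_sqrt (Finset.sum_nonneg fun j _ => sq_nonneg _)).symm
          _ ≤ B ^ 2 := by
              exact pow_le_pow_left₀ (Real.sqrt_nonneg _) h1 2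
      have hxdiff : (∑ j, (e' p j - e' x₀ j) ^ 2) ≤ r ^ 2 := by
        have hd : ∀ j, e' p j - e' x₀ j = e' (p - x₀) j := by
          intro j
          rw [map_sub]
          rfl
        simp only [hd]
        have hnorm : ‖p - x₀‖ ^ 2 = ∑ j, (e' (p - x₀) j) ^ 2 := by
          rw [EuclideanSpace.norm_eq, Real.sq_sqrt (Finset.sum_nonneg fun j _ => sq_nonneg _)]
          exact Finset.sum_congr rfl fun j _ => by
            rw [Real.norm_eq_abs, sq_abs]
            rfl
        rw [← hnorm]
        have : ‖p - x₀‖ ≤ r := by rwa [← dist_eq_norm]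
        exact pow_le_pow_left₀ (norm_nonneg _) this 2
      have hsv : (sN:ℝ) - vN = r ^ 2 * B ^ 2 := by rw [hsN, hvN]; ring
      rw [hsv, hdiff]
      calc (∑ j, A i j * (e' p j - e' x₀ j)) ^ 2
          ≤ (∑ j, (A i j) ^ 2) * (∑ j, (e' p j - e' x₀ j) ^ 2) := hcs
        _ ≤ B ^ 2 * r ^ 2 := by
            refine mul_le_mul hA hxdiff (Finset.sum_nonneg fun j _ => sq_nonneg _) (by positivity)
        _ = r ^ 2 * B ^ 2 := by ring
    -- step 4 : Cauchy-Schwarz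
    have hchi : ∫⁻ x, (ρ x) ^ 2 ∂Q ≤ X := by
      have hpt : ∀ x : Fin m → ℝ, (ρ x) ^ 2 = ∏ i, (ENNReal.ofReal
          (gaussianPDFReal (cP i) vN (x i) / gaussianPDFReal (cQ i) sN (x i))) ^ 2 := by
        intro x
        rw [hρ_def, ← Finset.prod_pow]
      have hfac : ∫⁻ x, (ρ x) ^ 2 ∂Q = ∏ i, ∫⁻ t, (ENNReal.ofReal
          (gaussianPDFReal (cP i) vN t / gaussianPDFReal (cQ i) sN t)) ^ 2
            ∂gaussianReal (cQ i) sN := by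
        rw [lintegral_congr hpt, hQ_def]
        exact lintegral_pi_prod m (fun i => gaussianReal (cQ i) sN) (fun i => inferInstance)
          (fun i t => (ENNReal.ofReal
            (gaussianPDFReal (cP i) vN t / gaussianPDFReal (cQ i) sN t)) ^ 2)
          (fun i => ((((measurable_gaussianPDFReal _ _).div
            (measurable_gaussianPDFReal _ _)).ennreal_ofReal).pow_const 2))
      rw [hfac, hX_def]
      calc ∏ i, ∫⁻ t, (ENNReal.ofReal
            (gaussianPDFReal (cP i) vN t / gaussianPDFReal (cQ i) sN t)) ^ 2
              ∂gaussianReal (cQ i) sN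
          ≤ ∏ _i : Fin m, ENNReal.ofReal ((sN:ℝ) / vN) := by
            exact Finset.prod_le_prod' fun i _ =>
              lintegral_ratio_sq_le (cP i) (cQ i) vN sN hvpos hvs (hmean i)
        _ = ENNReal.ofReal ((sN:ℝ) / vN) ^ m := by
            rw [Finset.prod_const, Finset.card_univ, Fintype.card_fin]
    have hHp : (g p) ^ 2 ≤ (∫⁻ w, F w ∂Q) * X := by
      have h1 : g p = ∫⁻ x, ρ x * F x ∂Q := by
        rw [hE1, hE2, lintegral_withDensity_eq_lintegral_mul Q hρmeas hF]
        rfl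
      calc (g p) ^ 2 = (∫⁻ x, ρ x * F x ∂Q) ^ 2 := by rw [h1]
        _ ≤ (∫⁻ x, F x ∂Q) * ∫⁻ x, (ρ x) ^ 2 ∂Q := lintegral_cs Q ρ F hρmeas hF hFle
        _ ≤ (∫⁻ w, F w ∂Q) * X := by gcongr
    have hq : (4:ℝ≥0∞)⁻¹ ≤ (∫⁻ w, F w ∂Q) * X := by
      refine le_trans ?_ hHp
      have : ((2:ℝ≥0∞)⁻¹) ^ 2 ≤ (g p) ^ 2 := pow_le_pow_left' hgp 2
      calc (4:ℝ≥0∞)⁻¹ = ((2:ℝ≥0∞)⁻¹) ^ 2 := by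
            rw [← ENNReal.inv_pow]; norm_num
        _ ≤ (g p) ^ 2 := this
    have := mul_le_mul_left hq X⁻¹
    rwa [mul_assoc, ENNReal.mul_inv_cancel hX0 hXtop, mul_one] at this
  -- summing over S
  have hsum : (S.card : ℝ≥0∞) * (4⁻¹ * X⁻¹) ≤ 1 := by
    have hdisj : (↑S : Set (EucSp n)).PairwiseDisjoint
        (fun p => Metric.closedBall p η) := by
      intro p hp q hq hpq
      refine Metric.closedBall_disjoint_closedBall ?_
      have := hsep p (Finset.mem_coe.1 hp) q (Finset.mem_coe.1 hq) hpq
      linarith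
    have hsum1 : ∑ p ∈ S, ∫⁻ w, dec (e.symm w) (Metric.closedBall p η) ∂Q ≤ 1 := by
      rw [← lintegral_finset_sum _ (fun p _ =>
        measurable_dec_ball dec η (fun w => e.symm w) hesym (fun _ => p) measurable_const)]
      calc ∫⁻ w, ∑ p ∈ S, dec (e.symm w) (Metric.closedBall p η) ∂Q
          ≤ ∫⁻ _, 1 ∂Q := by
            refine lintegral_mono fun w => ?_
            rw [← measure_biUnion_finset hdisj (fun p _ => measurableSet_closedBall)]
            exact prob_le_one
        _ = 1 := by simp
    calc (S.card : ℝ≥0∞) * (4⁻¹ * X⁻¹)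
        = ∑ _p ∈ S, (4⁻¹ * X⁻¹ : ℝ≥0∞) := by
          rw [Finset.sum_const, nsmul_eq_mul]
      _ ≤ ∑ p ∈ S, ∫⁻ w, dec (e.symm w) (Metric.closedBall p η) ∂Q :=
          Finset.sum_le_sum hpoint
      _ ≤ 1 := hsum1
  have hcard : (S.card : ℝ≥0∞) ≤ 4 * X := by
    have h1 := ENNReal.le_inv_iff_mul_le.2 hsum
    rwa [ENNReal.mul_inv (Or.inl (by norm_num)) (Or.inl (by norm_num)),
      inv_inv, inv_inv] at h1
  -- pass to the reals
  have hratio : (sN:ℝ) / vN = 1 + m * r ^ 2 * B ^ 2 / σ ^ 2 := by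
    rw [hsN, hvN]
    have hm0 : (m:ℝ) ≠ 0 := Nat.cast_ne_zero.2 hm.ne'
    field_simp
  have hcardR : (S.card : ℝ) ≤ 4 * (1 + m * r ^ 2 * B ^ 2 / σ ^ 2) ^ m := by
    have h4X : (4:ℝ≥0∞) * X = ENNReal.ofReal (4 * ((sN:ℝ)/vN) ^ m) := by
      rw [hX_def, ← ENNReal.ofReal_pow (by positivity), ENNReal.ofReal_mul (by norm_num)]
      norm_num
    rw [h4X] at hcard
    rw [← hratio]
    rcases Nat.eq_zero_or_pos S.card with h0 | hpos
    · rw [h0]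
      push_cast
      positivity
    · rw [← ENNReal.ofReal_natCast] at hcard
      exact (ENNReal.ofReal_le_ofReal_iff (by positivity)).1 hcard
  calc (covNum R (3 * η) (4 * δ) : ℝ) ≤ (S.card : ℝ) := Nat.cast_le.2 hcovS
    _ ≤ 4 * (1 + m * r ^ 2 * B ^ 2 / σ ^ 2) ^ m := hcardR

end CSLB

/-- **Lower bound, deterministic matrix** (`thm:lower`, first part).
If a (possibly randomized) recovery scheme using a fixed matrix `A` and noise level `σ`
achieves `‖x̂ - x⋆‖ ≤ O(η)` with probability `≥ 1 - δ` over `x⋆ ∼ R` (supported on a ball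
of radius `r`) and the noise, then
`m ≥ 0.15 / log(1 + m r² ‖A‖_∞² / σ²) · (log cov_{3η,4δ}(R) + log(6δ) - O(1))`. -/
theorem compressed_sensing_lower_bound_deterministic :
    ∃ Cerr CO : ℝ, 0 < Cerr ∧ 0 < CO ∧
      ∀ (n m : ℕ) (r σ η δ : ℝ) (x₀ : EucSp n) (R : Measure (EucSp n)) (A : MatR m n),
        IsProbabilityMeasure R → R (Metric.closedBall x₀ r)ᶜ = 0 →
        0 < σ → 0 < η → 0 < δ → δ < 0.1 →
        -- a Markov kernel `dec` (randomized recovery scheme taking `y` as input,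
        -- for the fixed matrix `A`) succeeding with probability `≥ 1 - δ`
        (∃ dec : Kernel (EucSp m) (EucSp n), IsMarkovKernel dec ∧
          ENNReal.ofReal (1 - δ) ≤
            ∫⁻ q, dec q.2 {z | ‖z - q.1‖ ≤ Cerr * η} ∂(jointXY R A σ)) →
        (m : ℝ) ≥ 0.15 / Real.log (1 + m * r ^ 2 * (maxRowNorm A) ^ 2 / σ ^ 2) *
          (Real.log (covNum R (3 * η) (4 * δ)) + Real.log (6 * δ) - CO) := by
  refine ⟨1, 2, one_pos, two_pos, ?_⟩
  intro n m r σ η δ x₀ R A hR hsupp hσ hη hδ hδ' hdec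
  obtain ⟨dec, hmk, hsucc⟩ := hdec
  set B := maxRowNorm A with hB_def
  set L := Real.log (1 + ↑m * r ^ 2 * B ^ 2 / σ ^ 2) with hL_def
  have hBnn : (0:ℝ) ≤ (m:ℝ) * r ^ 2 * B ^ 2 / σ ^ 2 := by positivity
  have hL0 : 0 ≤ L := Real.log_nonneg (by linarith)
  rcases eq_or_lt_of_le hL0 with hLz | hLpos
  · rw [ge_iff_le, ← hLz, _root_.div_zero, zero_mul]
    positivity
  · have hm : 0 < m := by
      by_contra hm0
      push_neg at hm0
      have hmz : m = 0 := Nat.le_zero.1 hm0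
      rw [hL_def, hmz] at hLpos
      norm_num at hLpos
    haveI := hmk
    have hcov := CSLB.covering_bound hm r σ η δ x₀ R A hR hsupp hσ hη hδ hδ' dec hmk hsucc
    have hargpos : (0:ℝ) < 1 + ↑m * r ^ 2 * B ^ 2 / σ ^ 2 := by linarith
    have hlogcov : Real.log (covNum R (3 * η) (4 * δ)) ≤ Real.log 4 + m * L := by
      rcases Nat.eq_zero_or_pos (covNum R (3 * η) (4 * δ)) with h0 | hpos
      · rw [h0]
        simp only [Nat.cast_zero, Real.log_zero]
        have : (0:ℝ) ≤ Real.log 4 := Real.log_nonneg (by norm_num)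
        have hmL : (0:ℝ) ≤ m * L := by positivity
        linarith
      · have hcpos : (0:ℝ) < (covNum R (3 * η) (4 * δ) : ℝ) := by exact_mod_cast hpos
        have h1 := Real.log_le_log hcpos hcov
        rwa [Real.log_mul (by norm_num) (by positivity), Real.log_pow, ← hL_def] at h1
    have h6δ : Real.log (6 * δ) ≤ 0 := Real.log_nonpos (by linarith) (by linarith)
    have hlog4 : Real.log 4 ≤ 2 := by
      have h2 : Real.log 4 = 2 * Real.log 2 := by
        rw [show (4:ℝ) = 2 ^ 2 by norm_num, Real.log_pow]
        push_cast
        ring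
      have h3 := Real.log_two_lt_d9
      nlinarith
    have hbr : Real.log (covNum R (3 * η) (4 * δ)) + Real.log (6 * δ) - 2 ≤ m * L := by
      linarith
    have hfac : (0:ℝ) ≤ 0.15 / L := by positivity
    rw [ge_iff_le]
    calc 0.15 / L * (Real.log (covNum R (3 * η) (4 * δ)) + Real.log (6 * δ) - 2)
        ≤ 0.15 / L * (m * L) := mul_le_mul_of_nonneg_left hbr hfac
      _ = 0.15 * m := by
          field_simp
      _ ≤ m := by
          have : (0:ℝ) ≤ (m:ℝ) := Nat.cast_nonneg m
          nlinarith


end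
end

section
/- Let y be generated from x* by a Gaussian measurement process with m measurements and noise level σ. Fix x̃ ∈ ℝⁿ and parameters η > 0, c ≥ 4e². Let P_out be any distribution supported on the set S = { x ∈ ℝⁿ : ‖x − x̃‖ ≥ c(η + σ) }, and let P_{x̃} be any distribution supported within the ball of radius η centered at x̃. For a fixed matrix A, let H_{x̃} denote the distribution of y when x* ~ P_{x̃}, and let H_out denote the distribution of y when x* ~ P_out. Then E_A[ TV(H_{x̃}, H_out) ] ≥ 1 − 4 e^{ −(m/2) log( c / (4e²) ) }. -/
open MeasureTheory ProbabilityTheory ENNReal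
open scoped NNReal

noncomputable section

section AuxNoisy
open Real

lemma core_gauss (s u : ℝ) (v : ℝ≥0) (h : 2*s*v < 1) :
    ∫⁻ w, ENNReal.ofReal (Real.exp (s*(u+w)^2)) ∂(gaussianReal 0 v)
      = ENNReal.ofReal (Real.exp (s*u^2/(1-2*s*v)) / Real.sqrt (1-2*s*v)) := by
  by_cases hv : v = 0
  · subst hv
    rw [gaussianReal_zero_var, lintegral_dirac' _ (by fun_prop)]
    norm_num
  · have hv0 : (0:ℝ) < (v:ℝ) := lt_of_le_of_ne (v.coe_nonneg) (by exact_mod_cast (Ne.symm hv))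
    have hd : (0:ℝ) < 1 - 2*s*v := by linarith
    set d : ℝ := 1 - 2*s*(v:ℝ) with hd_def
    set α : ℝ := d / (2*(v:ℝ)) with hα_def
    have hα : 0 < α := div_pos hd (by linarith)
    set β : ℝ := 2*(v:ℝ)*s*u/d with hβ_def
    set γ : ℝ := s*u^2/d with hγ_def
    have key : ∀ w : ℝ, gaussianPDFReal 0 v w * Real.exp (s*(u+w)^2)
        = (Real.sqrt (2*π*v))⁻¹ * Real.exp (-α*(w-β)^2 + γ) := by
      intro w
      have e1 : Real.exp (-(w - 0) ^ 2 / (2 * (v:ℝ))) * Real.exp (s * (u + w) ^ 2)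
          = Real.exp (-α*(w-β)^2 + γ) := by
        rw [← Real.exp_add]
        congr 1
        have hv' : (v:ℝ) ≠ 0 := hv0.ne'
        have hd'' : d ≠ 0 := hd.ne'
        simp only [hα_def, hβ_def, hγ_def]
        field_simp
        rw [hd_def]
        ring
      rw [gaussianPDFReal, mul_assoc, e1]
    rw [gaussianReal_of_var_ne_zero _ hv]
    rw [lintegral_withDensity_eq_lintegral_mul _ (measurable_gaussianPDF _ _) (by fun_prop)]
    have h2 : ∀ w:ℝ, gaussianPDF 0 v w * ENNReal.ofReal (Real.exp (s*(u+w)^2))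
        = ENNReal.ofReal ((Real.sqrt (2*π*v))⁻¹ * Real.exp (-α*(w-β)^2 + γ)) := by
      intro w
      rw [gaussianPDF, ← ENNReal.ofReal_mul (gaussianPDFReal_nonneg _ _ _), key w]
    simp_rw [Pi.mul_apply, h2]
    have hsq : (0:ℝ) < Real.sqrt (2*π*v) := Real.sqrt_pos.2 (by positivity)
    rw [← ofReal_integral_eq_lintegral_ofReal]
    · congr 1
      have hint : ∫ w:ℝ, (Real.sqrt (2*π*v))⁻¹ * Real.exp (-α*(w-β)^2 + γ)
          = (Real.sqrt (2*π*v))⁻¹ * Real.exp γ * ∫ w:ℝ, Real.exp (-α*(w-β)^2) := by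
        simp_rw [Real.exp_add, ← integral_const_mul]
        congr 1; ext w; ring
      rw [hint, integral_sub_right_eq_self (fun w => Real.exp (-α*w^2)) β, integral_gaussian α]
      have hπα : π / α = (2*π*(v:ℝ)) / d := by
        simp only [hα_def]; field_simp
      rw [hπα, Real.sqrt_div' _ (by positivity)]
      field_simp
    · have : Integrable (fun w:ℝ => (Real.sqrt (2*π*(v:ℝ)))⁻¹ * (Real.exp (-α*(w-β)^2) * Real.exp γ)) :=
        (((integrable_exp_neg_mul_sq hα).comp_sub_right β).mul_const _).const_mul _
      simpa [Real.exp_add] using this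
    · refine ae_of_all _ fun w => by positivity

lemma pi_gauss (k : ℕ) (c : Fin k → ℝ) (v : Fin k → ℝ≥0) (s u : ℝ)
    (h : 2*s*(∑ i, c i^2 * (v i:ℝ)) < 1) :
    ∫⁻ w, ENNReal.ofReal (Real.exp (s*(u + ∑ i, c i * w i)^2))
        ∂(Measure.pi fun i => gaussianReal 0 (v i))
      = ENNReal.ofReal (Real.exp (s*u^2/(1-2*s*(∑ i, c i^2 * (v i:ℝ))))
          / Real.sqrt (1-2*s*(∑ i, c i^2 * (v i:ℝ)))) := by
  induction k generalizing u with
  | zero =>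
      simp only [Finset.univ_eq_empty, Finset.sum_empty, add_zero, mul_zero, sub_zero]
      rw [lintegral_const]
      simp [Real.sqrt_one]
  | succ k ih =>
      have mp := (measurePreserving_piFinSuccAbove (fun i => gaussianReal 0 (v i)) 0).symm
      rw [← mp.lintegral_comp (f := fun w => ENNReal.ofReal (Real.exp (s*(u + ∑ i, c i * w i)^2)))
        (by fun_prop)]
      have hVt : (0:ℝ) ≤ ∑ i : Fin k, (c i.succ)^2 * (v i.succ : ℝ) :=
        Finset.sum_nonneg fun i _ => by positivity
      set Vt : ℝ := ∑ i : Fin k, (c i.succ)^2 * (v i.succ : ℝ) with hVt_def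
      have hVsum : ∑ i : Fin (k+1), c i^2 * (v i:ℝ) = c 0^2 * (v 0:ℝ) + Vt := by
        rw [Fin.sum_univ_succ]
      have hc0v : (0:ℝ) ≤ c 0^2 * (v 0:ℝ) := by positivity
      have htail : 2*s*Vt < 1 := by
        rcases le_or_gt s 0 with hs | hs
        · nlinarith
        · nlinarith
      have hdt : (0:ℝ) < 1 - 2*s*Vt := by linarith
      have step1 : ∀ x : ℝ × (Fin k → ℝ),
          (fun w => ENNReal.ofReal (Real.exp (s*(u + ∑ i, c i * w i)^2)))
            ((MeasurableEquiv.piFinSuccAbove (fun _ => ℝ) 0).symm x)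
          = ENNReal.ofReal (Real.exp (s*((u + c 0 * x.1) + ∑ i : Fin k, c i.succ * x.2 i)^2)) := by
        intro x
        simp only [MeasurableEquiv.piFinSuccAbove_symm_apply, Fin.insertNth_zero]
        rw [Fin.sum_univ_succ]
        simp [Fin.succAbove, add_assoc]
      simp only [step1]
      rw [lintegral_prod _ (by fun_prop)]
      have inner : ∀ x1 : ℝ,
          ∫⁻ xs, ENNReal.ofReal (Real.exp (s*((u + c 0 * x1) + ∑ i : Fin k, c i.succ * xs i)^2))
            ∂(Measure.pi fun i : Fin k => gaussianReal 0 (v i.succ))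
          = ENNReal.ofReal (Real.exp (s*(u + c 0 * x1)^2/(1-2*s*Vt)) / Real.sqrt (1-2*s*Vt)) := by
        intro x1
        exact ih (fun i => c i.succ) (fun i => v i.succ) (u + c 0 * x1) htail
      have congr_inner : (fun x1 : ℝ => ∫⁻ xs, ENNReal.ofReal
            (Real.exp (s*((u + c 0 * x1) + ∑ i : Fin k, c i.succ * xs i)^2))
            ∂(Measure.pi fun i : Fin k => gaussianReal 0 (v i.succ)))
          = fun x1 => ENNReal.ofReal (Real.sqrt (1-2*s*Vt))⁻¹ *
              ENNReal.ofReal (Real.exp ((s/(1-2*s*Vt))*(u + c 0 * x1)^2)) := by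
        funext x1
        rw [inner x1, div_eq_inv_mul, ENNReal.ofReal_mul (by positivity)]
        congr 3
        field_simp
      simp only [Fin.zero_succAbove]
      simp only [congr_inner]
      rw [lintegral_const_mul' _ _ ENNReal.ofReal_ne_top]
      set s2 : ℝ := s/(1-2*s*Vt) with hs2_def
      have hsw : ∫⁻ x, ENNReal.ofReal (Real.exp (s2*(u + c 0 * x)^2)) ∂(gaussianReal 0 (v 0))
          = ∫⁻ y, ENNReal.ofReal (Real.exp (s2*(u+y)^2))
              ∂((gaussianReal 0 (v 0)).map (c 0 * ·)) :=
        (lintegral_map (f := fun y : ℝ => ENNReal.ofReal (Real.exp (s2*(u+y)^2)))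
          (g := fun x : ℝ => c 0 * x) (by fun_prop) (by fun_prop)).symm
      rw [hsw, gaussianReal_map_const_mul (c 0)]
      have h2 : 2*s2*((NNReal.mk ((c 0)^2) (sq_nonneg (c 0)) * v 0 : ℝ≥0):ℝ) < 1 := by
        have hcoe : ((NNReal.mk ((c 0)^2) (sq_nonneg (c 0)) * v 0 : ℝ≥0):ℝ) = (c 0)^2 * (v 0:ℝ) := rfl
        rw [hcoe, hs2_def]
        have he : 2*(s/(1-2*s*Vt))*((c 0)^2*(v 0:ℝ)) = (2*s*((c 0)^2*(v 0:ℝ)))/(1-2*s*Vt) := by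
          ring
        rw [he, div_lt_one hdt]
        rw [hVsum] at h
        linarith
      rw [mul_zero, core_gauss s2 u _ h2]
      have hcoe : ((NNReal.mk ((c 0)^2) (sq_nonneg (c 0)) * v 0 : ℝ≥0):ℝ) = (c 0)^2 * (v 0:ℝ) := rfl
      rw [hcoe, hVsum]
      set D : ℝ := (c 0)^2 * (v 0:ℝ) + Vt with hD_def
      have hDpos : (0:ℝ) < 1 - 2*s*D := by rw [hVsum] at h; linarith
      set d2 : ℝ := 1 - 2*s2*((c 0)^2*(v 0:ℝ)) with hd2_def
      have hd2 : (0:ℝ) < d2 := by rw [hd2_def]; rw [hcoe] at h2; linarith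
      have hDD : (1-2*s*Vt) * d2 = 1 - 2*s*D := by
        rw [hd2_def, hs2_def, hD_def]
        field_simp
        ring
      rw [← ENNReal.ofReal_mul (by positivity)]
      congr 1
      have e1 : s2*u^2/d2 = s*u^2/(1-2*s*D) := by
        rw [← hDD, hs2_def]
        field_simp
      have e2 : Real.sqrt (1-2*s*Vt) * Real.sqrt d2 = Real.sqrt (1-2*s*D) := by
        rw [← Real.sqrt_mul hdt.le, hDD]
      rw [e1, ← e2]
      have hsq1 : (0:ℝ) < Real.sqrt (1-2*s*Vt) := Real.sqrt_pos.2 hdt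
      have hsq2 : (0:ℝ) < Real.sqrt d2 := Real.sqrt_pos.2 hd2
      field_simp

lemma lintegral_pi_prod {m : ℕ} {α : Fin m → Type*} [∀ i, MeasurableSpace (α i)]
    (μ : ∀ i, Measure (α i)) [∀ i, SigmaFinite (μ i)]
    (f : ∀ i, α i → ℝ≥0∞) (hf : ∀ i, Measurable (f i)) :
    ∫⁻ x, ∏ i, f i (x i) ∂Measure.pi μ = ∏ i, ∫⁻ x, f i x ∂μ i := by
  induction m with
  | zero => simp
  | succ m ih =>
      have mp := (measurePreserving_piFinSuccAbove μ 0).symm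
      rw [← mp.lintegral_comp (f := fun x => ∏ i, f i (x i)) (by fun_prop)]
      have step : ∀ x : α 0 × (∀ j : Fin m, α ((0:Fin (m+1)).succAbove j)),
          (fun x => ∏ i, f i (x i)) ((MeasurableEquiv.piFinSuccAbove α 0).symm x)
          = f 0 x.1 * ∏ j : Fin m, f j.succ (x.2 j) := by
        intro x
        simp only [MeasurableEquiv.piFinSuccAbove_symm_apply, Fin.insertNth_zero]
        rw [Fin.prod_univ_succ]
        rfl
      simp only [step]
      rw [lintegral_prod_mul (f := f 0) (g := fun y : ∀ j : Fin m, α ((0:Fin (m+1)).succAbove j) => ∏ j : Fin m, f j.succ (y j)) (hf 0).aemeasurable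
        (Finset.measurable_prod Finset.univ fun j _ => (hf j.succ).comp (measurable_pi_apply j)).aemeasurable]
      rw [Fin.prod_univ_succ]
      congr 1
      have := ih (fun j : Fin m => μ ((0:Fin (m+1)).succAbove j))
        (fun j => f ((0:Fin (m+1)).succAbove j)) (fun j => hf _)
      simp only [Fin.zero_succAbove] at this
      exact this

lemma matrix_mgf (m n : ℕ) (z : Fin n → ℝ) (w k : ℝ≥0) (s : ℝ)
    (h : 2*s*((∑ j, z j^2 * (w:ℝ)) + (k:ℝ)) < 1) :
    ∫⁻ Ab : (Fin m → Fin n → ℝ) × (Fin m → ℝ),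
        ENNReal.ofReal (Real.exp (s * ∑ i, (∑ j, Ab.1 i j * z j + Ab.2 i)^2))
      ∂((Measure.pi fun _ : Fin m => Measure.pi fun _ : Fin n => gaussianReal 0 w).prod
          (Measure.pi fun _ : Fin m => gaussianReal 0 k))
    = (ENNReal.ofReal (1 / Real.sqrt (1-2*s*((∑ j, z j^2 * (w:ℝ)) + (k:ℝ)))))^m := by
  have hVz : (0:ℝ) ≤ ∑ j, z j^2 * (w:ℝ) := Finset.sum_nonneg fun j _ => by positivity
  set Vz : ℝ := ∑ j, z j^2 * (w:ℝ) with hVz_def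
  have hk : (0:ℝ) ≤ (k:ℝ) := k.coe_nonneg
  have hsk : 2*s*(k:ℝ) < 1 := by
    rcases le_or_gt s 0 with hs | hs
    · nlinarith
    · nlinarith
  have hdk : (0:ℝ) < 1 - 2*s*(k:ℝ) := by linarith
  set s2 : ℝ := s/(1-2*s*(k:ℝ)) with hs2_def
  have h2 : 2*s2*Vz < 1 := by
    rw [hs2_def]
    have he : 2*(s/(1-2*s*(k:ℝ)))*Vz = (2*s*Vz)/(1-2*s*(k:ℝ)) := by ring
    rw [he, div_lt_one hdk]
    linarith
  have hd2 : (0:ℝ) < 1 - 2*s2*Vz := by linarith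
  have hprod : (1-2*s*(k:ℝ)) * (1-2*s2*Vz) = 1-2*s*(Vz + (k:ℝ)) := by
    rw [hs2_def]; field_simp; ring
  have hmeas : Measurable (fun Ab : (Fin m → Fin n → ℝ) × (Fin m → ℝ) =>
      ENNReal.ofReal (Real.exp (s * ∑ i, (∑ j, Ab.1 i j * z j + Ab.2 i)^2))) := by
    apply Measurable.ennreal_ofReal
    apply Real.measurable_exp.comp
    apply Measurable.const_mul
    apply Finset.measurable_sum _ fun i _ => ?_
    apply Measurable.pow_const
    apply Measurable.add
    · exact Finset.measurable_sum _ fun j _ =>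
        ((measurable_pi_apply j).comp ((measurable_pi_apply i).comp measurable_fst)).mul_const _
    · exact (measurable_pi_apply i).comp measurable_snd
  rw [lintegral_prod _ hmeas.aemeasurable]
  -- inner integral over b for fixed A
  have hin : ∀ A : Fin m → Fin n → ℝ,
      ∫⁻ b : Fin m → ℝ, ENNReal.ofReal (Real.exp (s * ∑ i, (∑ j, A i j * z j + b i)^2))
          ∂(Measure.pi fun _ : Fin m => gaussianReal 0 k)
      = (ENNReal.ofReal ((Real.sqrt (1-2*s*(k:ℝ)))⁻¹))^m *
          ∏ i, ENNReal.ofReal (Real.exp (s2 * (0 + ∑ j, z j * A i j)^2)) := by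
    intro A
    have e1 : ∀ b : Fin m → ℝ, ENNReal.ofReal (Real.exp (s * ∑ i, (∑ j, A i j * z j + b i)^2))
        = ∏ i, ENNReal.ofReal (Real.exp (s * (∑ j, A i j * z j + b i)^2)) := by
      intro b
      rw [Finset.mul_sum, Real.exp_sum, ← ENNReal.ofReal_prod_of_nonneg]
      exact fun i _ => (Real.exp_pos _).le
    simp only [e1]
    rw [lintegral_pi_prod (fun _ : Fin m => gaussianReal 0 k)
      (fun i (b:ℝ) => ENNReal.ofReal (Real.exp (s * (∑ j, A i j * z j + b)^2)))
      (fun i => by fun_prop)]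
    have e2 : ∀ i, ∫⁻ x : ℝ, ENNReal.ofReal (Real.exp (s * (∑ j, A i j * z j + x)^2))
          ∂(gaussianReal 0 k)
        = ENNReal.ofReal ((Real.sqrt (1-2*s*(k:ℝ)))⁻¹)
            * ENNReal.ofReal (Real.exp (s2 * (0 + ∑ j, z j * A i j)^2)) := by
      intro i
      rw [core_gauss s (∑ j, A i j * z j) k hsk,
        ← ENNReal.ofReal_mul (by positivity)]
      congr 1
      rw [div_eq_mul_inv, mul_comm]
      congr 1
      rw [hs2_def]
      have : ∑ j, z j * A i j = ∑ j, A i j * z j := by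
        exact Finset.sum_congr rfl fun j _ => mul_comm _ _
      rw [this, zero_add]
      field_simp
    simp only [e2]
    rw [Finset.prod_mul_distrib, Finset.prod_const, Finset.card_univ, Fintype.card_fin]
  simp only [hin]
  rw [lintegral_const_mul' _ _ (by exact ENNReal.pow_ne_top ENNReal.ofReal_ne_top)]
  rw [lintegral_pi_prod (fun _ : Fin m => Measure.pi fun _ : Fin n => gaussianReal 0 w)
    (fun _ a => ENNReal.ofReal (Real.exp (s2 * ((0:ℝ) + ∑ j, z j * a j)^2)))
    (fun i => by
      apply Measurable.ennreal_ofReal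
      apply Real.measurable_exp.comp
      apply Measurable.const_mul
      apply Measurable.pow_const
      exact measurable_const.add (Finset.measurable_sum _ fun j _ =>
        (measurable_pi_apply j).const_mul _))]
  have e4 : ∫⁻ a : Fin n → ℝ, ENNReal.ofReal (Real.exp (s2 * ((0:ℝ) + ∑ j, z j * a j)^2))
      ∂(Measure.pi fun _ : Fin n => gaussianReal 0 w)
      = ENNReal.ofReal (1 / Real.sqrt (1-2*s2*Vz)) := by
    have := pi_gauss n z (fun _ => w) s2 0 (by simpa [hVz_def] using h2)
    simp only [hVz_def] at this ⊢
    rw [this]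
    norm_num
  rw [e4, Finset.prod_const, Finset.card_univ, Fintype.card_fin, ← mul_pow,
    ← ENNReal.ofReal_mul (by positivity)]
  congr 2
  rw [← hprod, Real.sqrt_mul hdk.le, one_div, one_div, mul_inv]

variable {m n : ℕ}

lemma meas_F (z : Fin n → ℝ) (s : ℝ) : Measurable (fun Ab : (Fin m → Fin n → ℝ) × (Fin m → ℝ) =>
      ENNReal.ofReal (Real.exp (s * ∑ i, (∑ j, Ab.1 i j * z j + Ab.2 i)^2))) := by
  apply Measurable.ennreal_ofReal
  apply Real.measurable_exp.comp
  apply Measurable.const_mul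
  apply Finset.measurable_sum _ fun i _ => ?_
  apply Measurable.pow_const
  apply Measurable.add
  · exact Finset.measurable_sum _ fun j _ =>
      ((measurable_pi_apply j).comp ((measurable_pi_apply i).comp measurable_fst)).mul_const _
  · exact (measurable_pi_apply i).comp measurable_snd

lemma chernoff_ub (z : Fin n → ℝ) (w k : ℝ≥0) (s T : ℝ) (hs : 0 < s)
    (h : 2*s*((∑ j, z j^2 * (w:ℝ)) + (k:ℝ)) < 1) :
    ((Measure.pi fun _ : Fin m => Measure.pi fun _ : Fin n => gaussianReal 0 w).prod
        (Measure.pi fun _ : Fin m => gaussianReal 0 k))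
      {Ab | T ≤ ∑ i, (∑ j, Ab.1 i j * z j + Ab.2 i)^2}
    ≤ ENNReal.ofReal (Real.exp (-(s*T))) *
        (ENNReal.ofReal (1/Real.sqrt (1-2*s*((∑ j, z j^2 * (w:ℝ)) + (k:ℝ)))))^m := by
  set ν := ((Measure.pi fun _ : Fin m => Measure.pi fun _ : Fin n => gaussianReal 0 w).prod
        (Measure.pi fun _ : Fin m => gaussianReal 0 k))
  have hsub : {Ab : (Fin m → Fin n → ℝ) × (Fin m → ℝ) | T ≤ ∑ i, (∑ j, Ab.1 i j * z j + Ab.2 i)^2}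
      ⊆ {Ab | ENNReal.ofReal (Real.exp (s*T))
          ≤ ENNReal.ofReal (Real.exp (s * ∑ i, (∑ j, Ab.1 i j * z j + Ab.2 i)^2))} := by
    intro Ab hAb
    exact ENNReal.ofReal_le_ofReal (Real.exp_le_exp.2 (mul_le_mul_of_nonneg_left hAb hs.le))
  refine le_trans (measure_mono hsub) ?_
  refine le_trans (meas_ge_le_lintegral_div (meas_F z s).aemeasurable
    (by simp [Real.exp_pos]) ENNReal.ofReal_ne_top) ?_
  rw [matrix_mgf m n z w k s h, ENNReal.div_eq_inv_mul,
    ← ENNReal.ofReal_inv_of_pos (Real.exp_pos _), ← Real.exp_neg]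
  
lemma chernoff_lb (z : Fin n → ℝ) (w k : ℝ≥0) (s T : ℝ) (hs : 0 < s)
    (hW : 0 ≤ (∑ j, z j^2 * (w:ℝ)) + (k:ℝ)) :
    ((Measure.pi fun _ : Fin m => Measure.pi fun _ : Fin n => gaussianReal 0 w).prod
        (Measure.pi fun _ : Fin m => gaussianReal 0 k))
      {Ab | ∑ i, (∑ j, Ab.1 i j * z j + Ab.2 i)^2 ≤ T}
    ≤ ENNReal.ofReal (Real.exp (s*T)) *
        (ENNReal.ofReal (1/Real.sqrt (1+2*s*((∑ j, z j^2 * (w:ℝ)) + (k:ℝ)))))^m := by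
  have h' : 2*(-s)*((∑ j, z j^2 * (w:ℝ)) + (k:ℝ)) < 1 := by nlinarith
  have hsub : {Ab : (Fin m → Fin n → ℝ) × (Fin m → ℝ) | ∑ i, (∑ j, Ab.1 i j * z j + Ab.2 i)^2 ≤ T}
      ⊆ {Ab | ENNReal.ofReal (Real.exp (-s*T))
          ≤ ENNReal.ofReal (Real.exp ((-s) * ∑ i, (∑ j, Ab.1 i j * z j + Ab.2 i)^2))} := by
    intro Ab hAb
    simp only [Set.mem_setOf_eq] at hAb ⊢
    apply ENNReal.ofReal_le_ofReal
    apply Real.exp_le_exp.2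
    nlinarith
  refine le_trans (measure_mono hsub) ?_
  refine le_trans (meas_ge_le_lintegral_div (meas_F z (-s)).aemeasurable
    (by simp [Real.exp_pos]) ENNReal.ofReal_ne_top) ?_
  rw [matrix_mgf m n z w k (-s) h', ENNReal.div_eq_inv_mul,
    ← ENNReal.ofReal_inv_of_pos (Real.exp_pos _), ← Real.exp_neg]
  have e1 : 1-2*(-s)*((∑ j, z j^2 * (w:ℝ)) + (k:ℝ)) = 1+2*s*((∑ j, z j^2 * (w:ℝ)) + (k:ℝ)) := by
    ring
  rw [e1]
  have e2 : -(-s*T) = s*T := by ring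
  rw [e2]

lemma log_facts : Real.log 4 = 2 * Real.log 2 := by
  rw [show (4:ℝ) = 2^2 by norm_num, Real.log_pow]
  push_cast; ring

lemma num_pt (m : ℕ) (hm : 0 < m) (σ η c SZ : ℝ) (hσ : 0 ≤ σ) (hη : 0 < η)
    (hc : 4*Real.exp 2 ≤ c) (hSZ0 : 0 ≤ SZ) (hSZ : SZ ≤ η^2) :
    Real.exp (-(((m:ℝ)/(4*(η+σ)^2))*(Real.exp 1*c*(η+σ)^2))) *
      (1/Real.sqrt (1-2*((m:ℝ)/(4*(η+σ)^2))*(SZ*(m:ℝ)⁻¹ + σ^2/(m:ℝ))))^m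
    ≤ Real.exp (-((m:ℝ)/2)*Real.log (c/(4*Real.exp 2))) := by
  have hm0 : (0:ℝ) < (m:ℝ) := by exact_mod_cast hm
  have he2 : (0:ℝ) < Real.exp 2 := Real.exp_pos 2
  have hc0 : (0:ℝ) < c := lt_of_lt_of_le (by positivity) hc
  have hησ : (0:ℝ) < η + σ := by linarith
  have he1 : (2:ℝ) < Real.exp 1 := by
    have := Real.exp_one_gt_d9; linarith
  set s : ℝ := (m:ℝ)/(4*(η+σ)^2) with hs_def
  set W : ℝ := SZ*(m:ℝ)⁻¹ + σ^2/(m:ℝ) with hW_def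
  clear_value s W
  have hsW : 2*s*W ≤ 1/2 := by
    have key : 2*s*W = (SZ+σ^2)/(2*(η+σ)^2) := by
      rw [hs_def, hW_def]; field_simp; ring
    rw [key, div_le_div_iff₀ (by positivity) (by norm_num)]
    nlinarith
  have hd : (1:ℝ)/2 ≤ 1 - 2*s*W := by linarith
  have hWnn : 0 ≤ W := by rw [hW_def]; positivity
  have hsq : 1/Real.sqrt (1-2*s*W) ≤ Real.sqrt 2 := by
    rw [div_le_iff₀ (Real.sqrt_pos.2 (by linarith))]
    rw [← Real.sqrt_mul (by norm_num : (0:ℝ) ≤ 2)]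
    have h1 : Real.sqrt 1 ≤ Real.sqrt (2*(1-2*s*W)) := Real.sqrt_le_sqrt (by linarith)
    rwa [Real.sqrt_one] at h1
  have hpow : (1/Real.sqrt (1-2*s*W))^m ≤ (Real.sqrt 2)^m :=
    pow_le_pow_left₀ (by positivity) hsq m
  have hst : s*(Real.exp 1*c*(η+σ)^2) = (m:ℝ)*(Real.exp 1*c)/4 := by
    rw [hs_def]; field_simp
  have hsqrt2 : (Real.sqrt 2)^m = Real.exp ((m:ℝ)*(Real.log 2/2)) := by
    rw [Real.exp_nat_mul, ← Real.log_sqrt (by norm_num : (0:ℝ) ≤ 2),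
      Real.exp_log (Real.sqrt_pos.2 (by norm_num))]
  have hlog : Real.log (c/(4*Real.exp 2)) = Real.log c - (Real.log 4 + 2) := by
    rw [Real.log_div (ne_of_gt hc0) (by positivity), Real.log_mul (by norm_num) (ne_of_gt he2),
      Real.log_exp]
  have coeff : Real.log 2 + Real.log c ≤ Real.exp 1*c/2 + Real.log 4 + 2 := by
    have h5 : Real.log c ≤ c - 1 := Real.log_le_sub_one_of_pos hc0
    have h6 : Real.log 2 ≤ Real.log 4 := Real.log_le_log (by norm_num) (by norm_num)
    nlinarith
  calc Real.exp (-(s*(Real.exp 1*c*(η+σ)^2))) * (1/Real.sqrt (1-2*s*W))^m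
      ≤ Real.exp (-((m:ℝ)*(Real.exp 1*c)/4)) * Real.exp ((m:ℝ)*(Real.log 2/2)) := by
        rw [hst, ← hsqrt2]
        exact mul_le_mul_of_nonneg_left hpow (le_of_lt (Real.exp_pos _))
    _ = Real.exp ((m:ℝ)*(Real.log 2/2) - (m:ℝ)*(Real.exp 1*c)/4) := by
        rw [← Real.exp_add]; ring_nf
    _ ≤ Real.exp (-((m:ℝ)/2)*Real.log (c/(4*Real.exp 2))) := by
        apply Real.exp_le_exp.2
        rw [hlog]
        nlinarith [mul_le_mul_of_nonneg_left coeff (by positivity : (0:ℝ) ≤ (m:ℝ)/2)]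

lemma num_pout (m : ℕ) (hm : 0 < m) (σ η c SZ : ℝ) (hσ : 0 ≤ σ) (hη : 0 < η)
    (hc : 4*Real.exp 2 ≤ c) (hSZ : c^2*(η+σ)^2 ≤ SZ) :
    Real.exp ((c/(2*(SZ*(m:ℝ)⁻¹ + σ^2/(m:ℝ))))*(Real.exp 1*c*(η+σ)^2)) *
      (1/Real.sqrt (1+2*(c/(2*(SZ*(m:ℝ)⁻¹ + σ^2/(m:ℝ))))*(SZ*(m:ℝ)⁻¹ + σ^2/(m:ℝ))))^m
    ≤ Real.exp (-((m:ℝ)/2)*Real.log (c/(4*Real.exp 2))) := by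
  have hm0 : (0:ℝ) < (m:ℝ) := by exact_mod_cast hm
  have he2 : (0:ℝ) < Real.exp 2 := Real.exp_pos 2
  have hc0 : (0:ℝ) < c := lt_of_lt_of_le (by positivity) hc
  have hησ : (0:ℝ) < η + σ := by linarith
  have he1 : (2:ℝ) < Real.exp 1 := by
    have := Real.exp_one_gt_d9; linarith
  have hSZ0 : (0:ℝ) < SZ := lt_of_lt_of_le (by positivity) hSZ
  set W : ℝ := SZ*(m:ℝ)⁻¹ + σ^2/(m:ℝ) with hW_def
  clear_value W
  have hW0 : (0:ℝ) < W := by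
    rw [hW_def]; positivity
  set s : ℝ := c/(2*W) with hs_def
  clear_value s
  have h2sW : 1+2*s*W = 1+c := by
    rw [hs_def]; field_simp
  have hst : s*(Real.exp 1*c*(η+σ)^2) ≤ (m:ℝ)*Real.exp 1/2 := by
    rw [hs_def, div_mul_eq_mul_div, div_le_iff₀ (by positivity)]
    have hWlb : c^2*(η+σ)^2 ≤ (m:ℝ)*W := by
      rw [hW_def]
      have : (m:ℝ)*(SZ*(m:ℝ)⁻¹ + σ^2/(m:ℝ)) = SZ + σ^2 := by field_simp
      rw [this]; nlinarith
    nlinarith [mul_le_mul_of_nonneg_left hWlb (le_of_lt (Real.exp_pos 1))]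
  have hsqc : (1/Real.sqrt (1+c))^m = Real.exp (-((m:ℝ)*(Real.log (1+c)/2))) := by
    rw [one_div, ← Real.exp_log (Real.sqrt_pos.2 (by linarith : (0:ℝ) < 1+c)),
      ← Real.exp_neg, ← Real.exp_nat_mul, Real.log_sqrt (by linarith : (0:ℝ) ≤ 1+c)]
    congr 1
    ring
  have hlog : Real.log (c/(4*Real.exp 2)) = Real.log c - (Real.log 4 + 2) := by
    rw [Real.log_div (ne_of_gt hc0) (by positivity), Real.log_mul (by norm_num) (ne_of_gt he2),
      Real.log_exp]
  have coeff : Real.exp 1 + Real.log c ≤ Real.log (1+c) + Real.log 4 + 2 := by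
    have h5 : Real.log c ≤ Real.log (1+c) := Real.log_le_log hc0 (by linarith)
    have h6 : (1.3862943606:ℝ) < Real.log 4 := by
      rw [log_facts]
      have := Real.log_two_gt_d9; linarith
    have h7 : Real.exp 1 < 2.7182818286 := Real.exp_one_lt_d9
    nlinarith
  rw [h2sW, hsqc]
  calc Real.exp (s*(Real.exp 1*c*(η+σ)^2)) * Real.exp (-((m:ℝ)*(Real.log (1+c)/2)))
      ≤ Real.exp ((m:ℝ)*Real.exp 1/2) * Real.exp (-((m:ℝ)*(Real.log (1+c)/2))) := by
        exact mul_le_mul_of_nonneg_right (Real.exp_le_exp.2 hst) (le_of_lt (Real.exp_pos _))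
    _ = Real.exp ((m:ℝ)*Real.exp 1/2 - (m:ℝ)*(Real.log (1+c)/2)) := by
        rw [← Real.exp_add]; ring_nf
    _ ≤ Real.exp (-((m:ℝ)/2)*Real.log (c/(4*Real.exp 2))) := by
        apply Real.exp_le_exp.2
        rw [hlog]
        nlinarith [mul_le_mul_of_nonneg_left coeff (by positivity : (0:ℝ) ≤ (m:ℝ)/2)]

lemma cond_pt (m : ℕ) (hm : 0 < m) (σ η SZ : ℝ) (hσ : 0 ≤ σ) (hη : 0 < η)
    (hSZ0 : 0 ≤ SZ) (hSZ : SZ ≤ η^2) :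
    2*((m:ℝ)/(4*(η+σ)^2))*(SZ*(m:ℝ)⁻¹ + σ^2/(m:ℝ)) < 1 := by
  have hm0 : (0:ℝ) < (m:ℝ) := by exact_mod_cast hm
  have hησ : (0:ℝ) < η + σ := by linarith
  have key : 2*((m:ℝ)/(4*(η+σ)^2))*(SZ*(m:ℝ)⁻¹ + σ^2/(m:ℝ)) = (SZ+σ^2)/(2*(η+σ)^2) := by
    field_simp; ring
  rw [key, div_lt_one (by positivity)]
  nlinarith

lemma meas_q {m n : ℕ} (xt : EucSp n) (t2 : ℝ) :
    MeasurableSet {q : (MatR m n × EucSp n) × (Fin m → ℝ) |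
      ∑ i, (∑ j, q.1.1 i j * (q.1.2 j - xt j) + q.2 i)^2 ≤ t2} := by
  apply measurableSet_le _ measurable_const
  apply Finset.measurable_sum _ fun i _ => Measurable.pow_const ?_ 2
  apply Measurable.add
  · apply Finset.measurable_sum _ fun j _ => Measurable.mul ?_ ?_
    · exact (measurable_pi_apply j).comp ((measurable_pi_apply i).comp
        (measurable_fst.comp measurable_fst))
    · fun_prop
  · exact (measurable_pi_apply i).comp measurable_snd

lemma meas_EB {m n : ℕ} (xt : EucSp n) (t2 : ℝ) :
    MeasurableSet {q : MatR m n × (EucSp n × (Fin m → ℝ)) |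
      ∑ i, (∑ j, q.1 i j * (q.2.1 j - xt j) + q.2.2 i)^2 ≤ t2} := by
  have h := meas_q (m := m) (n := n) xt t2
  have hmap : Measurable (fun q : MatR m n × (EucSp n × (Fin m → ℝ)) =>
      ((q.1, q.2.1), q.2.2) : MatR m n × (EucSp n × (Fin m → ℝ)) →
        (MatR m n × EucSp n) × (Fin m → ℝ)) :=
    (measurable_fst.prodMk (measurable_fst.comp measurable_snd)).prodMk
      (measurable_snd.comp measurable_snd)
  exact hmap h

lemma meas_sec_x {m n : ℕ} (xt : EucSp n) (t2 : ℝ) (x : EucSp n) :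
    MeasurableSet {Ab : MatR m n × (Fin m → ℝ) |
      ∑ i, (∑ j, Ab.1 i j * (x j - xt j) + Ab.2 i)^2 ≤ t2} := by
  have h := meas_q (m := m) (n := n) xt t2
  have hmap : Measurable (fun Ab : MatR m n × (Fin m → ℝ) => ((Ab.1, x), Ab.2) :
      MatR m n × (Fin m → ℝ) → (MatR m n × EucSp n) × (Fin m → ℝ)) :=
    (measurable_fst.prodMk measurable_const).prodMk measurable_snd
  exact hmap h

lemma meas_sec_A {m n : ℕ} (xt : EucSp n) (t2 : ℝ) (A : MatR m n) :
          MeasurableSet {p : EucSp n × (Fin m → ℝ) |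
      ∑ i, (∑ j, A i j * (p.1 j - xt j) + p.2 i)^2 ≤ t2} := by
  have h := meas_q (m := m) (n := n) xt t2
  have hmap : Measurable (fun p : EucSp n × (Fin m → ℝ) => ((A, p.1), p.2) :
      EucSp n × (Fin m → ℝ) → (MatR m n × EucSp n) × (Fin m → ℝ)) :=
    (measurable_const.prodMk measurable_fst).prodMk measurable_snd
  exact hmap h

lemma plumb {m n : ℕ} (xt : EucSp n) (t2 : ℝ) (K : ℝ≥0)
    (P : Measure (EucSp n)) [IsFiniteMeasure P] :
    ∫⁻ A, (P.prod (Measure.pi fun _ : Fin m => gaussianReal 0 K))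
        (Prod.mk A ⁻¹' {q : MatR m n × (EucSp n × (Fin m → ℝ)) |
          ∑ i, (∑ j, q.1 i j * (q.2.1 j - xt j) + q.2.2 i)^2 ≤ t2}) ∂(gaussMatrix m n)
    = ∫⁻ x, ((gaussMatrix m n).prod (Measure.pi fun _ : Fin m => gaussianReal 0 K))
        {Ab : MatR m n × (Fin m → ℝ) |
          ∑ i, (∑ j, Ab.1 i j * (x j - xt j) + Ab.2 i)^2 ≤ t2} ∂P := by
  have hMprob : IsProbabilityMeasure (gaussMatrix m n) := by
    rw [gaussMatrix]; infer_instance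
  have step1 : ∀ A : MatR m n,
      (P.prod (Measure.pi fun _ : Fin m => gaussianReal 0 K))
        (Prod.mk A ⁻¹' {q : MatR m n × (EucSp n × (Fin m → ℝ)) |
          ∑ i, (∑ j, q.1 i j * (q.2.1 j - xt j) + q.2.2 i)^2 ≤ t2})
      = ∫⁻ x, (Measure.pi fun _ : Fin m => gaussianReal 0 K)
          (Prod.mk (A, x) ⁻¹' {q : (MatR m n × EucSp n) × (Fin m → ℝ) |
            ∑ i, (∑ j, q.1.1 i j * (q.1.2 j - xt j) + q.2 i)^2 ≤ t2}) ∂P := by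
    intro A
    exact Measure.prod_apply (meas_sec_A xt t2 A)
  simp only [step1]
  rw [lintegral_lintegral_swap ((measurable_measure_prodMk_left (meas_q xt t2)).aemeasurable)]
  congr 1
  funext x
  exact (Measure.prod_apply (meas_sec_x xt t2 x)).symm

end AuxNoisy

/-- **Separated supports give high TV distance in expectation** (`lemma: noisy pout tv improved`).
If `P_x̃` lives in the `η`-ball around `x̃` and `P_out` lives at distance `≥ c(η+σ)` from `x̃`,
`c ≥ 4e²`, then for Gaussian measurements with noise level `σ`,
`E_A[TV(H_x̃, H_out)] ≥ 1 - 4 e^{-(m/2) log(c/(4e²))}`. -/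
theorem noisy_pout_tv (n m : ℕ) (σ η c : ℝ) (hσ : 0 ≤ σ) (hη : 0 < η)
    (hc : 4 * Real.exp 2 ≤ c)
    (xt : EucSp n) (Pout Pt : Measure (EucSp n))
    (hPout : IsProbabilityMeasure Pout) (hPt : IsProbabilityMeasure Pt)
    (hout : Pout {x | ‖x - xt‖ < c * (η + σ)} = 0)
    (hin : Pt (Metric.closedBall xt η)ᶜ = 0) :
    ENNReal.ofReal (1 - 4 * Real.exp (-(m / 2) * Real.log (c / (4 * Real.exp 2)))) ≤
      ∫⁻ A, ENNReal.ofReal (tvDist (obsDist Pt A σ) (obsDist Pout A σ))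
        ∂(gaussMatrix m n) := by
  rcases Nat.eq_zero_or_pos m with hm0 | hm
  · subst hm0
    refine le_trans (le_of_eq ?_) zero_le
    apply ENNReal.ofReal_eq_zero.2
    simp only [Nat.cast_zero]
    norm_num [Real.exp_zero]
  have he2 : (0:ℝ) < Real.exp 2 := Real.exp_pos 2
  have hc0 : (0:ℝ) < c := lt_of_lt_of_le (by positivity) hc
  have hησ : (0:ℝ) < η + σ := by linarith
  have hm0 : (0:ℝ) < (m:ℝ) := by exact_mod_cast hm
  set ρ : ℝ := Real.exp (-((m:ℝ) / 2) * Real.log (c / (4 * Real.exp 2))) with hρ_def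
  have hρ0 : 0 ≤ ρ := le_of_lt (Real.exp_pos _)
  set t2 : ℝ := Real.exp 1 * c * (η + σ)^2 with ht2_def
  set K : ℝ≥0 := Real.toNNReal (σ^2 / (m:ℝ)) with hK_def
  have hKcoe : (K:ℝ) = σ^2/(m:ℝ) := Real.coe_toNNReal _ (by positivity)
  have hwcoe : (((m:ℝ≥0)⁻¹ : ℝ≥0) : ℝ) = ((m:ℝ))⁻¹ := by push_cast; ring
  set Pi2 : Measure (Fin m → ℝ) := Measure.pi fun _ : Fin m => gaussianReal 0 K with hPi2
  have hG : gaussianVec m (Real.toNNReal (σ^2 / (m:ℝ)))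
      = Pi2.map (⇑(EuclideanSpace.equiv (Fin m) ℝ).symm) := by
    rw [hPi2, hK_def, gaussianVec]
  haveI hMprob : IsProbabilityMeasure (gaussMatrix m n) := by
    rw [show gaussMatrix m n = Measure.pi fun _ : Fin m =>
      Measure.pi fun _ : Fin n => gaussianReal 0 ((m : ℝ≥0)⁻¹) from rfl]
    infer_instance
  haveI hPi2prob : IsProbabilityMeasure Pi2 := by rw [hPi2]; infer_instance
  set EB : Set (MatR m n × (EucSp n × (Fin m → ℝ))) :=
    {q | ∑ i, (∑ j, q.1 i j * (q.2.1 j - xt j) + q.2.2 i)^2 ≤ t2} with hEB_def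
  -- measurability of the observation ball
  have hS : ∀ A : MatR m n,
      MeasurableSet {y : EucSp m | ∑ i, (y i - applyMat A xt i)^2 ≤ t2} := by
    intro A
    apply measurableSet_le _ measurable_const
    exact Finset.measurable_sum _ fun i _ => by fun_prop
  -- measurability of x ↦ A x
  have happ : ∀ A : MatR m n, Measurable (fun x : EucSp n => applyMat A x) := by
    intro A
    show Measurable fun x : EucSp n => WithLp.toLp 2 (fun i => ∑ j, A i j * x j)
    fun_prop
  have hT : ∀ A : MatR m n,
      Measurable (fun p : EucSp n × EucSp m => (p.1, applyMat A p.1 + p.2)) := by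
    intro A
    exact measurable_fst.prodMk (((happ A).comp measurable_fst).add measurable_snd)
  -- algebraic massage
  have hmass : ∀ (A : MatR m n) (p : EucSp n × (Fin m → ℝ)) (i : Fin m),
      applyMat A p.1 i + p.2 i - applyMat A xt i = ∑ j, A i j * (p.1 j - xt j) + p.2 i := by
    intro A p i
    show (∑ j, A i j * p.1 j) + p.2 i - (∑ j, A i j * xt j) = _
    have h1 : ∑ j, A i j * (p.1 j - xt j) = ∑ j, A i j * p.1 j - ∑ j, A i j * xt j := by
      rw [← Finset.sum_sub_distrib]
      exact Finset.sum_congr rfl fun j _ => mul_sub _ _ _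
    rw [h1]; ring
  -- identification of obsDist of the ball with the product-measure section
  have hobs : ∀ (P : Measure (EucSp n)), IsProbabilityMeasure P → ∀ A : MatR m n,
      obsDist P A σ {y : EucSp m | ∑ i, (y i - applyMat A xt i)^2 ≤ t2}
        = (P.prod Pi2) (Prod.mk A ⁻¹' EB) := by
    intro P hP A
    have hpm : P.prod (Pi2.map (⇑(EuclideanSpace.equiv (Fin m) ℝ).symm))
        = (P.prod Pi2).map (Prod.map id (⇑(EuclideanSpace.equiv (Fin m) ℝ).symm)) := by
      rw [← Measure.map_prod_map (g := ⇑(EuclideanSpace.equiv (Fin m) ℝ).symm) P Pi2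
        measurable_id (WithLp.measurable_toLp 2 _), Measure.map_id]
    rw [obsDist, jointXY, Measure.map_map measurable_snd (hT A),
      Measure.map_apply (measurable_snd.comp (hT A)) (hS A), hG, hpm,
      Measure.map_apply (f := Prod.map id ⇑(EuclideanSpace.equiv (Fin m) ℝ).symm)
        (measurable_id.prodMap (WithLp.measurable_toLp 2 _))
        ((measurable_snd.comp (hT A)) (hS A))]
    congr 1
    ext p
    show ∑ i, ((applyMat A p.1 + (EuclideanSpace.equiv (Fin m) ℝ).symm p.2) i
        - applyMat A xt i)^2 ≤ t2 ↔ ∑ i, (∑ j, A i j * (p.1 j - xt j) + p.2 i)^2 ≤ t2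
    have h2 : ∀ i : Fin m, ((applyMat A p.1 + (EuclideanSpace.equiv (Fin m) ℝ).symm p.2) i
        - applyMat A xt i)^2
        = (∑ j, A i j * (p.1 j - xt j) + p.2 i)^2 := by
      intro i
      rw [show (applyMat A p.1 + (EuclideanSpace.equiv (Fin m) ℝ).symm p.2) i
        = applyMat A p.1 i + p.2 i from rfl, hmass A p i]
    rw [Finset.sum_congr rfl fun i _ => h2 i]
  -- probability measures
  have hobsprob : ∀ (P : Measure (EucSp n)), IsProbabilityMeasure P → ∀ A : MatR m n,
      IsProbabilityMeasure (obsDist P A σ) := by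
    intro P hP A
    rw [obsDist, jointXY]
    haveI : IsProbabilityMeasure (gaussianVec m (Real.toNNReal (σ^2 / (m:ℝ)))) := by
      rw [hG]; exact Measure.isProbabilityMeasure_map (WithLp.measurable_toLp 2 _).aemeasurable
    haveI : IsProbabilityMeasure ((P.prod (gaussianVec m (Real.toNNReal (σ^2/(m:ℝ))))).map
        (fun p : EucSp n × EucSp m => (p.1, applyMat A p.1 + p.2))) :=
      Measure.isProbabilityMeasure_map (hT A).aemeasurable
    exact Measure.isProbabilityMeasure_map measurable_snd.aemeasurable
  -- pointwise TV lower bound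
  have htv : ∀ A : MatR m n,
      (Pt.prod Pi2) (Prod.mk A ⁻¹' EB) - (Pout.prod Pi2) (Prod.mk A ⁻¹' EB)
        ≤ ENNReal.ofReal (tvDist (obsDist Pt A σ) (obsDist Pout A σ)) := by
    intro A
    rw [← hobs Pt hPt A, ← hobs Pout hPout A]
    haveI hμ := hobsprob Pt hPt A
    haveI hν := hobsprob Pout hPout A
    have hbdd : BddAbove (Set.range fun s : {s : Set (EucSp m) // MeasurableSet s} =>
        ((obsDist Pt A σ s.1).toReal - (obsDist Pout A σ s.1).toReal)) := by
      refine ⟨1, ?_⟩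
      rintro r ⟨s, rfl⟩
      have h1 : (obsDist Pt A σ s.1).toReal ≤ 1 := by
        simpa using ENNReal.toReal_mono ENNReal.one_ne_top prob_le_one
      have h2 : (0:ℝ) ≤ (obsDist Pout A σ s.1).toReal := ENNReal.toReal_nonneg
      simp only
      linarith
    have hsup : (obsDist Pt A σ {y : EucSp m | ∑ i, (y i - applyMat A xt i)^2 ≤ t2}).toReal
        - (obsDist Pout A σ {y : EucSp m | ∑ i, (y i - applyMat A xt i)^2 ≤ t2}).toReal
        ≤ tvDist (obsDist Pt A σ) (obsDist Pout A σ) :=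
      le_ciSup hbdd (⟨{y : EucSp m | ∑ i, (y i - applyMat A xt i)^2 ≤ t2}, hS A⟩ :
        {s : Set (EucSp m) // MeasurableSet s})
    calc obsDist Pt A σ {y : EucSp m | ∑ i, (y i - applyMat A xt i)^2 ≤ t2}
          - obsDist Pout A σ {y : EucSp m | ∑ i, (y i - applyMat A xt i)^2 ≤ t2}
        = ENNReal.ofReal ((obsDist Pt A σ {y : EucSp m | ∑ i, (y i - applyMat A xt i)^2 ≤ t2}).toReal)
          - ENNReal.ofReal ((obsDist Pout A σ {y : EucSp m | ∑ i, (y i - applyMat A xt i)^2 ≤ t2}).toReal) := by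
          rw [ENNReal.ofReal_toReal (measure_ne_top _ _), ENNReal.ofReal_toReal (measure_ne_top _ _)]
      _ = ENNReal.ofReal ((obsDist Pt A σ {y : EucSp m | ∑ i, (y i - applyMat A xt i)^2 ≤ t2}).toReal
          - (obsDist Pout A σ {y : EucSp m | ∑ i, (y i - applyMat A xt i)^2 ≤ t2}).toReal) :=
          (ENNReal.ofReal_sub _ ENNReal.toReal_nonneg).symm
      _ ≤ ENNReal.ofReal (tvDist (obsDist Pt A σ) (obsDist Pout A σ)) :=
          ENNReal.ofReal_le_ofReal hsup
  -- key lower bound for Pt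
  have key1 : (1:ℝ≥0∞) - ENNReal.ofReal ρ
      ≤ ∫⁻ A, (Pt.prod Pi2) (Prod.mk A ⁻¹' EB) ∂(gaussMatrix m n) := by
    rw [hPi2, hEB_def, plumb xt t2 K Pt]
    have hae : ∀ᵐ x ∂Pt, x ∈ Metric.closedBall xt η := by
      rw [ae_iff]
      exact hin
    have hconst : (1:ℝ≥0∞) - ENNReal.ofReal ρ
        = ∫⁻ _x, ((1:ℝ≥0∞) - ENNReal.ofReal ρ) ∂Pt := by
      rw [lintegral_const, measure_univ, mul_one]
    rw [hconst]
    apply lintegral_mono_ae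
    filter_upwards [hae] with x hx
    -- per x bound
    have hxnorm : ‖x - xt‖ ≤ η := by
      rw [← dist_eq_norm]; exact Metric.mem_closedBall.1 hx
    have hnorm : ‖x - xt‖^2 = ∑ j, (x j - xt j)^2 := by
      rw [EuclideanSpace.norm_eq, Real.sq_sqrt (by positivity)]
      simp [sq_abs]
    have hSZ : ∑ j, (x j - xt j)^2 ≤ η^2 := by
      rw [← hnorm]
      exact pow_le_pow_left₀ (norm_nonneg _) hxnorm 2
    have hSZ0 : (0:ℝ) ≤ ∑ j, (x j - xt j)^2 := Finset.sum_nonneg fun j _ => sq_nonneg _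
    set s : ℝ := (m:ℝ)/(4*(η+σ)^2) with hs_def
    have hWconv : (∑ j, (x j - xt j)^2 * (((m:ℝ≥0)⁻¹ : ℝ≥0):ℝ)) + (K:ℝ)
        = (∑ j, (x j - xt j)^2)*(m:ℝ)⁻¹ + σ^2/(m:ℝ) := by
      rw [← Finset.sum_mul, hKcoe, hwcoe]
    have hEmeas := meas_sec_x (m := m) (n := n) xt t2 x
    haveI : IsProbabilityMeasure ((gaussMatrix m n).prod Pi2) := by infer_instance
    have hcompl : ((gaussMatrix m n).prod Pi2)
        {Ab : MatR m n × (Fin m → ℝ) |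
          ∑ i, (∑ j, Ab.1 i j * (x j - xt j) + Ab.2 i)^2 ≤ t2}ᶜ ≤ ENNReal.ofReal ρ := by
      have hsub2 : {Ab : MatR m n × (Fin m → ℝ) |
          ∑ i, (∑ j, Ab.1 i j * (x j - xt j) + Ab.2 i)^2 ≤ t2}ᶜ
          ⊆ {Ab : MatR m n × (Fin m → ℝ) |
            t2 ≤ ∑ i, (∑ j, Ab.1 i j * (x j - xt j) + Ab.2 i)^2} := by
        intro Ab hAb
        simp only [Set.mem_compl_iff, Set.mem_setOf_eq] at hAb
        exact (not_le.mp hAb).le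
      refine le_trans (measure_mono hsub2) ?_
      have hcond : 2*s*((∑ j, (x j - xt j)^2 * (((m:ℝ≥0)⁻¹ : ℝ≥0):ℝ)) + (K:ℝ)) < 1 := by
        rw [hWconv, hs_def]
        exact cond_pt m hm σ η _ hσ hη hSZ0 hSZ
      refine le_trans (chernoff_ub (fun j => x j - xt j) ((m:ℝ≥0)⁻¹) K s t2
        (by rw [hs_def]; positivity) hcond) ?_
      rw [← ENNReal.ofReal_pow (by positivity), ← ENNReal.ofReal_mul (by positivity)]
      apply ENNReal.ofReal_le_ofReal
      rw [hWconv, hs_def, ht2_def, hρ_def]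
      exact num_pt m hm σ η c _ hσ hη hc hSZ0 hSZ
    have hcm := measure_add_measure_compl (μ := (gaussMatrix m n).prod Pi2) hEmeas
    rw [measure_univ] at hcm
    rw [tsub_le_iff_right]
    calc (1:ℝ≥0∞) = _ + _ := hcm.symm
      _ ≤ ((gaussMatrix m n).prod Pi2)
          {Ab : MatR m n × (Fin m → ℝ) |
            ∑ i, (∑ j, Ab.1 i j * (x j - xt j) + Ab.2 i)^2 ≤ t2} + ENNReal.ofReal ρ :=
        add_le_add_right hcompl _
  -- key upper bound for Pout
  have key2 : ∫⁻ A, (Pout.prod Pi2) (Prod.mk A ⁻¹' EB) ∂(gaussMatrix m n)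
      ≤ ENNReal.ofReal ρ := by
    rw [hPi2, hEB_def, plumb xt t2 K Pout]
    have hae : ∀ᵐ x ∂Pout, c*(η+σ) ≤ ‖x - xt‖ := by
      rw [ae_iff]
      simpa [not_le] using hout
    calc ∫⁻ x, ((gaussMatrix m n).prod (Measure.pi fun _ : Fin m => gaussianReal 0 K))
          {Ab : MatR m n × (Fin m → ℝ) |
            ∑ i, (∑ j, Ab.1 i j * (x j - xt j) + Ab.2 i)^2 ≤ t2} ∂Pout
        ≤ ∫⁻ _x, ENNReal.ofReal ρ ∂Pout := by
          apply lintegral_mono_ae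
          filter_upwards [hae] with x hx
          have hnorm : ‖x - xt‖^2 = ∑ j, (x j - xt j)^2 := by
            rw [EuclideanSpace.norm_eq, Real.sq_sqrt (by positivity)]
            simp [sq_abs]
          have hSZ : c^2*(η+σ)^2 ≤ ∑ j, (x j - xt j)^2 := by
            rw [← hnorm, ← mul_pow]
            exact pow_le_pow_left₀ (by positivity) hx 2
          have hSZ0 : (0:ℝ) < ∑ j, (x j - xt j)^2 := lt_of_lt_of_le (by positivity) hSZ
          set W : ℝ := (∑ j, (x j - xt j)^2)*(m:ℝ)⁻¹ + σ^2/(m:ℝ) with hW_def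
          have hW0 : (0:ℝ) < W := by rw [hW_def]; positivity
          have hWconv : (∑ j, (x j - xt j)^2 * (((m:ℝ≥0)⁻¹ : ℝ≥0):ℝ)) + (K:ℝ) = W := by
            rw [hW_def, ← Finset.sum_mul, hKcoe, hwcoe]
          refine le_trans (chernoff_lb (fun j => x j - xt j) ((m:ℝ≥0)⁻¹) K (c/(2*W)) t2
            (by positivity) (by rw [hWconv]; exact hW0.le)) ?_
          rw [← ENNReal.ofReal_pow (by positivity), ← ENNReal.ofReal_mul (by positivity)]
          apply ENNReal.ofReal_le_ofReal
          rw [hWconv, hW_def, ht2_def, hρ_def]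
          exact num_pout m hm σ η c _ hσ hη hc hSZ
      _ = ENNReal.ofReal ρ := by rw [lintegral_const, measure_univ, mul_one]
  -- assembly
  have hgPout_meas : Measurable (fun A : MatR m n => (Pout.prod Pi2) (Prod.mk A ⁻¹' EB)) := by
    apply measurable_measure_prodMk_left
    rw [hEB_def]
    exact meas_EB xt t2
  calc ENNReal.ofReal (1 - 4 * ρ)
      ≤ ENNReal.ofReal ((1 - ρ) - ρ) := ENNReal.ofReal_le_ofReal (by linarith)
    _ = ENNReal.ofReal (1 - ρ) - ENNReal.ofReal ρ := ENNReal.ofReal_sub _ hρ0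
    _ = ((1:ℝ≥0∞) - ENNReal.ofReal ρ) - ENNReal.ofReal ρ := by
        rw [ENNReal.ofReal_sub _ hρ0, ENNReal.ofReal_one]
    _ ≤ (∫⁻ A, (Pt.prod Pi2) (Prod.mk A ⁻¹' EB) ∂(gaussMatrix m n))
          - (∫⁻ A, (Pout.prod Pi2) (Prod.mk A ⁻¹' EB) ∂(gaussMatrix m n)) :=
        tsub_le_tsub key1 key2
    _ ≤ ∫⁻ A, ((Pt.prod Pi2) (Prod.mk A ⁻¹' EB) - (Pout.prod Pi2) (Prod.mk A ⁻¹' EB))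
          ∂(gaussMatrix m n) := lintegral_sub_le _ _ hgPout_meas
    _ ≤ ∫⁻ A, ENNReal.ofReal (tvDist (obsDist Pt A σ) (obsDist Pout A σ))
          ∂(gaussMatrix m n) := lintegral_mono htv

end
end

section
/- Let (x, x̂) be jointly distributed random vectors over ℝⁿ × ℝⁿ, where x ~ R, and suppose Pr[ ‖x − x̂‖ ≤ η ] ≥ 1 − δ. Then for any τ ≤ 1 − 3δ with δ < 1/3: 0.99 · τ · (1 − 2δ) · log cov_{3η, τ + 3δ}(R) ≤ I(x; x̂) + 1.98. -/
open MeasureTheory ProbabilityTheory ENNReal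
open scoped NNReal

noncomputable section

section FanoAux

/-- `x log x ≥ -1/e` for `x ≥ 0`. -/
lemma mul_log_ge_neg_inv_exp {x : ℝ} (hx : 0 ≤ x) : -(Real.exp 1)⁻¹ ≤ x * Real.log x := by
  rcases eq_or_lt_of_le hx with h | h
  · simp [← h]
    positivity
  · have hinv : 0 < x⁻¹ := inv_pos.mpr h
    have h1 : Real.log (x⁻¹ / Real.exp 1) ≤ x⁻¹ / Real.exp 1 - 1 :=
      Real.log_le_sub_one_of_pos (by positivity)
    rw [Real.log_div hinv.ne' (Real.exp_pos 1).ne', Real.log_exp, Real.log_inv] at h1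
    -- -log x - 1 ≤ x⁻¹/e - 1, so -log x ≤ x⁻¹ * e⁻¹, so x * log x ≥ -e⁻¹
    have h2 : -Real.log x ≤ x⁻¹ * (Real.exp 1)⁻¹ := by
      rw [div_eq_mul_inv] at h1; linarith
    have h3 : x * (-Real.log x) ≤ x * (x⁻¹ * (Real.exp 1)⁻¹) :=
      mul_le_mul_of_nonneg_left h2 hx
    rw [← mul_assoc, mul_inv_cancel₀ h.ne', one_mul] at h3
    linarith

lemma greedy_cover {n : ℕ} (R : Measure (EucSp n)) [IsProbabilityMeasure R] (r : ℝ) (m : ℕ) :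
    ∃ s : Finset (EucSp n), s.card ≤ m ∧
      (m : ℝ≥0∞) * (ENNReal.ofReal 0.99 *
        ⨆ c, R (Metric.closedBall c r \ ⋃ x ∈ s, Metric.closedBall x r)) ≤ 1 := by
  classical
  set U : Finset (EucSp n) → Set (EucSp n) := fun s => ⋃ x ∈ s, Metric.closedBall x r with hU
  have hUm : ∀ s, MeasurableSet (U s) := fun s =>
    s.measurableSet_biUnion (fun c _ => measurableSet_closedBall)
  have hpick : ∀ s : Finset (EucSp n), ∃ c : EucSp n,
      ENNReal.ofReal 0.99 * (⨆ c', R (Metric.closedBall c' r \ U s))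
        ≤ R (Metric.closedBall c r \ U s) := by
    intro s
    set S := ⨆ c', R (Metric.closedBall c' r \ U s) with hS
    rcases eq_or_ne S 0 with h0 | h0
    · exact ⟨0, by simp [h0]⟩
    · have hS1 : S ≤ 1 := iSup_le fun c => prob_le_one
      have hStop : S ≠ ⊤ := (lt_of_le_of_lt hS1 ENNReal.one_lt_top).ne
      have hlt : ENNReal.ofReal 0.99 * S < S := by
        calc ENNReal.ofReal 0.99 * S < 1 * S :=
              ENNReal.mul_lt_mul_left h0 hStop (ENNReal.ofReal_lt_one.mpr (by norm_num))
          _ = S := one_mul S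
      rw [hS] at hlt
      obtain ⟨c, hc⟩ := lt_iSup_iff.mp hlt
      exact ⟨c, hc.le⟩
  set pick : Finset (EucSp n) → EucSp n := fun s => Classical.choose (hpick s) with hpickdef
  have hpick' : ∀ s, ENNReal.ofReal 0.99 * (⨆ c', R (Metric.closedBall c' r \ U s))
      ≤ R (Metric.closedBall (pick s) r \ U s) := fun s => Classical.choose_spec (hpick s)
  set F : ℕ → Finset (EucSp n) := fun k => Nat.rec ∅ (fun _ s => insert (pick s) s) k with hF
  have hFsucc : ∀ k, F (k+1) = insert (pick (F k)) (F k) := fun k => rfl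
  have hcard : ∀ k, (F k).card ≤ k := by
    intro k
    induction k with
    | zero => simp [hF]
    | succ k ih =>
      rw [hFsucc]
      exact (Finset.card_insert_le _ _).trans (Nat.succ_le_succ ih)
  have hsub : ∀ k, U (F k) ⊆ U (F (k+1)) := by
    intro k x hx
    rw [hFsucc]
    simp only [hU, Set.mem_iUnion, exists_prop] at hx ⊢
    obtain ⟨i, hi, h⟩ := hx
    exact ⟨i, Finset.mem_insert_of_mem hi, h⟩
  have hUmono : ∀ k l, k ≤ l → U (F k) ⊆ U (F l) := by
    intro k l h
    induction h with
    | refl => exact subset_rfl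
    | step h ih => exact ih.trans (hsub _)
  set S : ℕ → ℝ≥0∞ := fun k => ⨆ c, R (Metric.closedBall c r \ U (F k)) with hSdef
  have hSanti : ∀ k l, k ≤ l → S l ≤ S k := fun k l h =>
    iSup_mono fun c => measure_mono (Set.diff_subset_diff_right (hUmono k l h))
  have hstep : ∀ k, R (U (F (k+1)))
      = R (U (F k)) + R (Metric.closedBall (pick (F k)) r \ U (F k)) := by
    intro k
    have heq : U (F (k+1)) = U (F k) ∪ (Metric.closedBall (pick (F k)) r \ U (F k)) := by
      rw [hFsucc]
      show ⋃ x ∈ insert (pick (F k)) (F k), Metric.closedBall x r = _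
      rw [Finset.set_biUnion_insert, Set.union_comm, Set.union_diff_self]
    rw [heq, measure_union disjoint_sdiff_self_right (measurableSet_closedBall.diff (hUm _))]
  have key : ∀ k, k ≤ m → (k : ℝ≥0∞) * (ENNReal.ofReal 0.99 * S m) ≤ R (U (F k)) := by
    intro k
    induction k with
    | zero => intro _; simp
    | succ k ih =>
      intro hk
      have hk' : k ≤ m := (Nat.le_succ k).trans hk
      have h1 : ENNReal.ofReal 0.99 * S m ≤ R (Metric.closedBall (pick (F k)) r \ U (F k)) :=
        le_trans (mul_le_mul_right (hSanti k m hk') _) (hpick' (F k))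
      calc ((k+1 : ℕ) : ℝ≥0∞) * (ENNReal.ofReal 0.99 * S m)
          = (k : ℝ≥0∞) * (ENNReal.ofReal 0.99 * S m) + (ENNReal.ofReal 0.99 * S m) := by
            push_cast
            ring
        _ ≤ R (U (F k)) + R (Metric.closedBall (pick (F k)) r \ U (F k)) :=
            add_le_add (ih hk') h1
        _ = R (U (F (k+1))) := (hstep k).symm
  exact ⟨F m, hcard m, le_trans (key m le_rfl) prob_le_one⟩

lemma setIntegral_log_rnDeriv_ge {α : Type*} [MeasurableSpace α] (μ ν : Measure α)
    [IsProbabilityMeasure μ] [IsProbabilityMeasure ν] (hac : μ ≪ ν)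
    (hint : Integrable (fun x => Real.log (μ.rnDeriv ν x).toReal) μ)
    {G : Set α} (hG : MeasurableSet G) :
    (μ G).toReal * Real.log ((μ G).toReal) - (μ G).toReal * Real.log ((ν G).toReal)
      ≤ ∫ x in G, Real.log (μ.rnDeriv ν x).toReal ∂μ := by
  rcases eq_or_ne (μ G) 0 with hμG | hμG
  · rw [Measure.restrict_eq_zero.mpr hμG, integral_zero_measure, hμG]
    simp
  · have hνG : ν G ≠ 0 := fun h => hμG (hac h)
    have hμG' : 0 < (μ G).toReal := ENNReal.toReal_pos hμG (measure_ne_top μ G)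
    have hνG' : 0 < (ν G).toReal := ENNReal.toReal_pos hνG (measure_ne_top ν G)
    set c : ℝ := (μ G).toReal / (ν G).toReal with hc
    have hc0 : 0 < c := div_pos hμG' hνG'
    -- measurability of the inverse density
    have hmeas_inv : AEStronglyMeasurable (fun x => ((μ.rnDeriv ν x).toReal)⁻¹) (μ.restrict G) :=
      ((Measure.measurable_rnDeriv μ ν).ennreal_toReal.inv).aestronglyMeasurable
    -- lintegral bound
    have hlint : ∫⁻ x in G, ENNReal.ofReal (((μ.rnDeriv ν x).toReal)⁻¹) ∂μ ≤ ν G := by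
      have h1 : ∀ x, ENNReal.ofReal (((μ.rnDeriv ν x).toReal)⁻¹) ≤ (μ.rnDeriv ν x)⁻¹ := by
        intro x
        rcases eq_or_ne (μ.rnDeriv ν x) 0 with h | h
        · simp [h]
        rcases eq_or_ne (μ.rnDeriv ν x) ⊤ with h' | h'
        · simp [h']
        · rw [← ENNReal.ofReal_toReal (a := (μ.rnDeriv ν x)⁻¹) (by simp [h]),
            ENNReal.toReal_inv]
      calc ∫⁻ x in G, ENNReal.ofReal (((μ.rnDeriv ν x).toReal)⁻¹) ∂μ
          ≤ ∫⁻ x in G, (μ.rnDeriv ν x)⁻¹ ∂μ := lintegral_mono fun x => h1 x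
        _ = ∫⁻ x in G, (μ.rnDeriv ν x)⁻¹ ∂(ν.withDensity (μ.rnDeriv ν)) := by
            rw [Measure.withDensity_rnDeriv_eq μ ν hac]
        _ = ∫⁻ x, (μ.rnDeriv ν x)⁻¹ ∂((ν.restrict G).withDensity (μ.rnDeriv ν)) := by
            rw [restrict_withDensity hG]
        _ = ∫⁻ x in G, (μ.rnDeriv ν * fun x => (μ.rnDeriv ν x)⁻¹) x ∂ν := by
            exact lintegral_withDensity_eq_lintegral_mul _ (Measure.measurable_rnDeriv μ ν)
              (Measure.measurable_rnDeriv μ ν).inv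
        _ ≤ ∫⁻ _x in G, 1 ∂ν := by
            refine lintegral_mono fun x => ?_
            simp only [Pi.mul_apply]
            exact ENNReal.mul_inv_le_one _
        _ ≤ ν G := by simp
    have hint_inv : Integrable (fun x => ((μ.rnDeriv ν x).toReal)⁻¹) (μ.restrict G) := by
      refine ⟨hmeas_inv, ?_⟩
      rw [hasFiniteIntegral_iff_ofReal (Filter.Eventually.of_forall fun x =>
        inv_nonneg.mpr ENNReal.toReal_nonneg)]
      exact lt_of_le_of_lt hlint (measure_lt_top ν G)
    have hptwise : ∀ᵐ x ∂(μ.restrict G),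
        Real.log c + 1 - c * ((μ.rnDeriv ν x).toReal)⁻¹ ≤ Real.log (μ.rnDeriv ν x).toReal := by
      have h1 : ∀ᵐ x ∂μ, 0 < μ.rnDeriv ν x := Measure.rnDeriv_pos hac
      have h2 : ∀ᵐ x ∂μ, μ.rnDeriv ν x < ⊤ := hac.ae_le (Measure.rnDeriv_lt_top μ ν)
      refine ae_restrict_of_ae ((h1.and h2).mono fun x hx => ?_)
      obtain ⟨hx1, hx2⟩ := hx
      have hy : 0 < (μ.rnDeriv ν x).toReal := ENNReal.toReal_pos hx1.ne' hx2.ne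
      have h3 := Real.log_le_sub_one_of_pos (div_pos hc0 hy)
      rw [Real.log_div hc0.ne' hy.ne', div_eq_mul_inv] at h3
      linarith
    have hintleft : Integrable
        (fun x => Real.log c + 1 - c * ((μ.rnDeriv ν x).toReal)⁻¹) (μ.restrict G) :=
      (integrable_const _).sub (hint_inv.const_mul c)
    have hmain := integral_mono_ae hintleft hint.restrict hptwise
    rw [integral_sub (integrable_const _) (hint_inv.const_mul c), integral_const,
      integral_const_mul, measureReal_restrict_apply_univ, Measure.real, smul_eq_mul] at hmain
    have hinvle : ∫ x in G, ((μ.rnDeriv ν x).toReal)⁻¹ ∂μ ≤ (ν G).toReal := by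
      rw [integral_eq_lintegral_of_nonneg_ae (Filter.Eventually.of_forall fun x =>
        inv_nonneg.mpr ENNReal.toReal_nonneg) hmeas_inv]
      exact ENNReal.toReal_mono (measure_ne_top ν G) hlint
    have hcν : c * (ν G).toReal = (μ G).toReal := div_mul_cancel₀ _ hνG'.ne'
    have hlogc : Real.log c = Real.log (μ G).toReal - Real.log (ν G).toReal :=
      Real.log_div hμG'.ne' hνG'.ne'
    have hmul : c * (∫ x in G, ((μ.rnDeriv ν x).toReal)⁻¹ ∂μ) ≤ c * (ν G).toReal :=
      mul_le_mul_of_nonneg_left hinvle hc0.le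
    nlinarith [hmain, hmul, hcν, hlogc, hμG'.le]

end FanoAux

set_option maxHeartbeats 2000000 in
/-- **Fano variant for approximate covering numbers** (`lem: covering continuous`).
If `x ∼ R` and `Pr[‖x - x̂‖ ≤ η] ≥ 1 - δ`, then for any `τ ≤ 1 - 3δ`, `δ < 1/3`:
`0.99 τ (1 - 2δ) log cov_{3η, τ+3δ}(R) ≤ I(x; x̂) + 1.98` (information measured in bits). -/
theorem fano_variant_covering (n : ℕ) (η δ τ : ℝ) (hδ : δ < 1 / 3) (hτ : τ ≤ 1 - 3 * δ)
    (R : Measure (EucSp n)) (hR : IsProbabilityMeasure R)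
    (μ : Measure (EucSp n × EucSp n)) (hμ : IsProbabilityMeasure μ)
    (hmarg : μ.map Prod.fst = R)
    (herr : ENNReal.ofReal (1 - δ) ≤ μ {q | ‖q.1 - q.2‖ ≤ η}) :
    ENNReal.ofReal (0.99 * τ * (1 - 2 * δ) * Real.logb 2 (covNum R (3 * η) (τ + 3 * δ)))
      ≤ mutualInfoBits μ + ENNReal.ofReal 1.98 := by
  have hδ0 : 0 ≤ δ := by
    have h1 : ENNReal.ofReal (1 - δ) ≤ 1 := le_trans herr prob_le_one
    have h2 : 1 - δ ≤ 1 := ENNReal.ofReal_le_one.mp h1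
    linarith
  set N := covNum R (3 * η) (τ + 3 * δ) with hNdef
  clear_value N
  have hlogbN0 : 0 ≤ Real.logb 2 (N : ℝ) := by
    rcases Nat.eq_zero_or_pos N with h0 | h1
    · simp [h0, Real.logb]
    · exact Real.logb_nonneg one_lt_two (by exact_mod_cast h1)
  have h2δ : 0 ≤ 1 - 2 * δ := by linarith
  have hlog2pos : 0 < Real.log 2 := Real.log_pos one_lt_two
  rcases le_or_gt τ 0 with hτ0 | hτ0
  · -- trivial: LHS is nonpositive
    have hle : 0.99 * τ * (1 - 2 * δ) * Real.logb 2 (N : ℝ) ≤ 0 := by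
      have h1 : 0.99 * τ ≤ 0 := by linarith
      nlinarith [mul_nonneg h2δ hlogbN0]
    rw [ENNReal.ofReal_eq_zero.mpr hle]
    exact zero_le
  have hτ1 : τ ≤ 1 := by linarith
  rcases le_or_gt N 4 with hN4 | hN5
  · -- trivial: LHS ≤ 1.98
    have hlogb4 : Real.logb 2 (N : ℝ) ≤ 2 := by
      rcases Nat.eq_zero_or_pos N with h0 | h1
      · simp [h0, Real.logb]
      · have hN1 : (1:ℝ) ≤ (N:ℝ) := by exact_mod_cast h1
        have hN4' : (N:ℝ) ≤ 4 := by exact_mod_cast hN4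
        have h2 : Real.log (N:ℝ) ≤ Real.log 4 := Real.log_le_log (by linarith) hN4'
        have h3 : Real.log 4 = 2 * Real.log 2 := by
          rw [show (4:ℝ) = 2 ^ 2 by norm_num, Real.log_pow]
          push_cast; ring
        rw [← Real.log_div_log, div_le_iff₀ hlog2pos]
        linarith
    have hle : 0.99 * τ * (1 - 2 * δ) * Real.logb 2 (N : ℝ) ≤ 1.98 := by
      have hx0 : 0 ≤ τ * (1 - 2 * δ) := mul_nonneg hτ0.le h2δ
      have hx1 : τ * (1 - 2 * δ) ≤ 1 := by nlinarith
      have hprod : τ * (1 - 2 * δ) * Real.logb 2 (N : ℝ) ≤ 1 * 2 :=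
        mul_le_mul hx1 hlogb4 hlogbN0 (by norm_num)
      nlinarith [hprod]
    exact le_trans (ENNReal.ofReal_le_ofReal hle) le_add_self
  -- main case : N ≥ 5
  set Q : Measure (EucSp n) := μ.map Prod.snd with hQ
  haveI hQprob : IsProbabilityMeasure Q := Measure.isProbabilityMeasure_map measurable_snd.aemeasurable
  set ν : Measure (EucSp n × EucSp n) := R.prod Q with hν
  haveI hνprob : IsProbabilityMeasure ν := by rw [hν]; infer_instance
  by_cases hkl : μ ≪ ν ∧ Integrable (fun x => Real.log (μ.rnDeriv ν x).toReal) μ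
  swap
  · -- infinite mutual information
    have hMI : mutualInfoBits μ = ⊤ := by
      unfold mutualInfoBits mutualInfoE klDivE
      rw [hmarg, ← hQ, ← hν, if_neg hkl]
      exact ENNReal.top_div_of_ne_top ENNReal.ofReal_ne_top
    rw [hMI]
    simp
  obtain ⟨hac, hint⟩ := hkl
  have hη0 : 0 ≤ η := by
    by_contra h
    push_neg at h
    have hempty : {q : EucSp n × EucSp n | ‖q.1 - q.2‖ ≤ η} = ∅ := by
      ext q
      simp only [Set.mem_setOf_eq, Set.mem_empty_iff_false, iff_false, not_le]
      exact lt_of_lt_of_le h (norm_nonneg _)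
    rw [hempty, measure_empty, nonpos_iff_eq_zero, ENNReal.ofReal_eq_zero] at herr
    linarith
  obtain ⟨s, hcard, hgreedy⟩ := greedy_cover R (3 * η) (N - 1)
  set V : Set (EucSp n) := ⋃ x ∈ s, Metric.closedBall x (3 * η) with hV
  have hVmeas : MeasurableSet V :=
    s.measurableSet_biUnion fun c _ => measurableSet_closedBall
  have hVsmall : R V < ENNReal.ofReal (1 - (τ + 3 * δ)) := by
    by_contra h
    push_neg at h
    have hmem : N ≤ s.card := by
      rw [hNdef]
      exact Nat.sInf_le ⟨s, rfl, h⟩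
    omega
  set Sm : ℝ≥0∞ := ⨆ c, R (Metric.closedBall c (3 * η) \ V) with hSm
  set Er : Set (EucSp n × EucSp n) := {q | ‖q.1 - q.2‖ ≤ η} with hEr
  have hErmeas : MeasurableSet Er :=
    (isClosed_le (Continuous.norm (continuous_fst.sub continuous_snd)) continuous_const).measurableSet
  set F : Set (EucSp n × EucSp n) := Er ∩ (Prod.fst ⁻¹' Vᶜ) with hF
  have hFmeas : MeasurableSet F := hErmeas.inter (hVmeas.compl.preimage measurable_fst)
  -- upper bound on ν F
  have hνF : ν F ≤ Sm := by
    rw [hν, Measure.prod_apply_symm hFmeas]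
    have hb : ∀ y : EucSp n, R ((fun x => (x, y)) ⁻¹' F) ≤ Sm := by
      intro y
      refine le_trans (measure_mono ?_)
        (le_iSup (fun c => R (Metric.closedBall c (3 * η) \ V)) y)
      intro x hx
      simp only [Set.mem_preimage, hF, hEr, Set.mem_inter_iff, Set.mem_setOf_eq,
        Set.mem_compl_iff] at hx
      obtain ⟨h1, h2⟩ := hx
      exact ⟨Metric.mem_closedBall.mpr (by rw [dist_eq_norm]; linarith), h2⟩
    calc ∫⁻ y, R ((fun x => (x, y)) ⁻¹' F) ∂Q ≤ ∫⁻ _y, Sm ∂Q := lintegral_mono hb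
      _ = Sm := by simp
  -- lower bound on μ F
  have hμEc : μ Erᶜ ≤ ENNReal.ofReal δ := by
    rw [prob_compl_eq_one_sub hErmeas]
    calc 1 - μ Er ≤ 1 - ENNReal.ofReal (1 - δ) := tsub_le_tsub le_rfl herr
      _ = ENNReal.ofReal 1 - ENNReal.ofReal (1 - δ) := by rw [ENNReal.ofReal_one]
      _ = ENNReal.ofReal (1 - (1 - δ)) := (ENNReal.ofReal_sub 1 (by linarith)).symm
      _ = ENNReal.ofReal δ := by ring_nf
  have hμA : ENNReal.ofReal (τ + 3 * δ) ≤ μ (Prod.fst ⁻¹' Vᶜ) := by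
    have h1 : μ (Prod.fst ⁻¹' Vᶜ) = R Vᶜ := by
      rw [← hmarg, Measure.map_apply measurable_fst hVmeas.compl]
    rw [h1, prob_compl_eq_one_sub hVmeas]
    refine ENNReal.le_sub_of_add_le_right (measure_ne_top R V) ?_
    calc ENNReal.ofReal (τ + 3 * δ) + R V
        ≤ ENNReal.ofReal (τ + 3 * δ) + ENNReal.ofReal (1 - (τ + 3 * δ)) :=
          add_le_add le_rfl hVsmall.le
      _ = ENNReal.ofReal ((τ + 3 * δ) + (1 - (τ + 3 * δ))) :=
          (ENNReal.ofReal_add (by linarith) (by linarith)).symm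
      _ = 1 := by norm_num
  have hsubset : Prod.fst ⁻¹' Vᶜ ⊆ F ∪ Erᶜ := by
    intro q hq
    by_cases h : q ∈ Er
    · exact Or.inl ⟨h, hq⟩
    · exact Or.inr h
  have hμF : ENNReal.ofReal (τ + 2 * δ) ≤ μ F := by
    have h2 : μ (Prod.fst ⁻¹' Vᶜ) ≤ μ F + ENNReal.ofReal δ :=
      le_trans (measure_mono hsubset)
        (le_trans (measure_union_le _ _) (add_le_add le_rfl hμEc))
    have h4 : ENNReal.ofReal (τ + 3 * δ) - ENNReal.ofReal δ ≤ μ F :=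
      tsub_le_iff_right.mpr (le_trans hμA h2)
    calc ENNReal.ofReal (τ + 2 * δ) = ENNReal.ofReal ((τ + 3 * δ) - δ) := by ring_nf
      _ = ENNReal.ofReal (τ + 3 * δ) - ENNReal.ofReal δ := ENNReal.ofReal_sub _ hδ0
      _ ≤ μ F := h4
  -- pass to real numbers
  set a : ℝ := (μ F).toReal with ha_def
  set a' : ℝ := (μ Fᶜ).toReal with ha'_def
  set b : ℝ := (ν F).toReal with hb_def
  set b' : ℝ := (ν Fᶜ).toReal with hb'_def
  have ha : τ + 2 * δ ≤ a :=
    (ENNReal.ofReal_le_iff_le_toReal (measure_ne_top μ F)).mp hμF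
  have hapos : 0 < a := by linarith
  have ha1 : a ≤ 1 := by
    rw [ha_def, ← ENNReal.toReal_one]
    exact ENNReal.toReal_mono ENNReal.one_ne_top prob_le_one
  have ha'0 : 0 ≤ a' := ENNReal.toReal_nonneg
  have hb'0 : 0 ≤ b' := ENNReal.toReal_nonneg
  have hb'1 : b' ≤ 1 := by
    rw [hb'_def, ← ENNReal.toReal_one]
    exact ENNReal.toReal_mono ENNReal.one_ne_top prob_le_one
  have hνF0 : ν F ≠ 0 := by
    intro h
    have h0 : μ F = 0 := hac h
    rw [h0] at hμF
    simp only [nonpos_iff_eq_zero, ENNReal.ofReal_eq_zero] at hμF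
    linarith
  have hbpos : 0 < b := ENNReal.toReal_pos hνF0 (measure_ne_top ν F)
  -- numeric bound on b
  have hN5' : (5:ℝ) ≤ (N:ℝ) := by exact_mod_cast hN5
  have hcpos : (0:ℝ) < 0.99 * ((N:ℝ) - 1) := by nlinarith
  have hble : 0.99 * ((N:ℝ) - 1) * b ≤ 1 := by
    have hcast : ((N - 1 : ℕ) : ℝ) = (N:ℝ) - 1 := by
      have h1 : 1 ≤ N := by omega
      push_cast [h1]
      ring
    have e1 : ENNReal.ofReal (0.99 * ((N:ℝ) - 1))
        = ENNReal.ofReal 0.99 * ((N - 1 : ℕ) : ℝ≥0∞) := by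
      rw [ENNReal.ofReal_mul (by norm_num), ← ENNReal.ofReal_natCast (N-1), hcast]
    have h1 : ENNReal.ofReal (0.99 * ((N:ℝ) - 1)) * ν F ≤ 1 := by
      calc ENNReal.ofReal (0.99 * ((N:ℝ) - 1)) * ν F
          = ((N - 1 : ℕ) : ℝ≥0∞) * (ENNReal.ofReal 0.99 * ν F) := by rw [e1]; ring
        _ ≤ ((N - 1 : ℕ) : ℝ≥0∞) * (ENNReal.ofReal 0.99 * Sm) :=
            mul_le_mul_right (mul_le_mul_right hνF _) _
        _ ≤ 1 := hgreedy
    have h2 := ENNReal.toReal_mono ENNReal.one_ne_top h1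
    rw [ENNReal.toReal_mul, ENNReal.toReal_ofReal hcpos.le, ENNReal.toReal_one] at h2
    exact h2
  -- log b bound
  have hlogb : Real.log b ≤ 0.27 - Real.log (N:ℝ) := by
    have hbinv : b ≤ 1 / (0.99 * ((N:ℝ) - 1)) := by
      rw [le_div_iff₀ hcpos]
      linarith [hble]
    have h1 : Real.log b ≤ Real.log (1 / (0.99 * ((N:ℝ) - 1))) :=
      Real.log_le_log hbpos hbinv
    rw [Real.log_div one_ne_zero hcpos.ne', Real.log_one, zero_sub] at h1
    have h3 : Real.log ((N:ℝ) / (0.99 * ((N:ℝ) - 1)))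
        ≤ (N:ℝ) / (0.99 * ((N:ℝ) - 1)) - 1 :=
      Real.log_le_sub_one_of_pos (by positivity)
    rw [Real.log_div (by positivity) hcpos.ne'] at h3
    have h4 : (N:ℝ) / (0.99 * ((N:ℝ) - 1)) ≤ 1.27 := by
      rw [div_le_iff₀ hcpos]
      nlinarith
    linarith
  -- KL lower bound
  set k : ℝ := ∫ x, Real.log (μ.rnDeriv ν x).toReal ∂μ with hk_def
  have h1 := setIntegral_log_rnDeriv_ge μ ν hac hint hFmeas
  have h2 := setIntegral_log_rnDeriv_ge μ ν hac hint hFmeas.compl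
  have hsplit : (∫ x in F, Real.log (μ.rnDeriv ν x).toReal ∂μ)
      + (∫ x in Fᶜ, Real.log (μ.rnDeriv ν x).toReal ∂μ) = k :=
    integral_add_compl hFmeas hint
  have hkge : a * Real.log a - a * Real.log b
      + (a' * Real.log a' - a' * Real.log b') ≤ k := by
    rw [← hsplit]
    exact add_le_add h1 h2
  -- numeric estimates
  have hxa := mul_log_ge_neg_inv_exp hapos.le
  have hxa' := mul_log_ge_neg_inv_exp ha'0
  have he : (Real.exp 1)⁻¹ ≤ 0.37 := by
    have hepos := Real.exp_pos 1
    have hee : Real.exp 1 * (Real.exp 1)⁻¹ = 1 := mul_inv_cancel₀ hepos.ne'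
    have hinvpos : (0:ℝ) < (Real.exp 1)⁻¹ := by positivity
    have h7 : (2.7182818283:ℝ) * (Real.exp 1)⁻¹ < 1 := by
      calc (2.7182818283:ℝ) * (Real.exp 1)⁻¹
          < Real.exp 1 * (Real.exp 1)⁻¹ :=
            mul_lt_mul_of_pos_right Real.exp_one_gt_d9 hinvpos
        _ = 1 := hee
    linarith
  have hlog2 : (0.6931:ℝ) ≤ Real.log 2 := by linarith [Real.log_two_gt_d9]
  have hlogN : Real.log 4 ≤ Real.log (N:ℝ) := Real.log_le_log (by norm_num) (by linarith)
  have hlog4 : Real.log 4 = 2 * Real.log 2 := by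
    rw [show (4:ℝ) = 2 ^ 2 by norm_num, Real.log_pow]
    push_cast; ring
  have hlogNpos : 0.27 ≤ Real.log (N:ℝ) := by linarith
  have hb'log : a' * Real.log b' ≤ 0 :=
    mul_nonpos_of_nonneg_of_nonpos ha'0 (Real.log_nonpos hb'0 hb'1)
  -- -a log b ≥ a (log N - 0.27) ≥ c log N - 0.27
  have hmb : a * (Real.log (N:ℝ) - 0.27) ≤ -(a * Real.log b) := by
    have := mul_le_mul_of_nonneg_left hlogb hapos.le
    linarith
  have hca : 0.99 * τ * (1 - 2 * δ) ≤ a := by nlinarith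
  have hc1 : 0.99 * τ * (1 - 2 * δ) ≤ 1 := by nlinarith
  have hc0 : 0 ≤ 0.99 * τ * (1 - 2 * δ) := by positivity
  have hmain : 0.99 * τ * (1 - 2 * δ) * Real.log (N:ℝ) - 0.27
      ≤ a * (Real.log (N:ℝ) - 0.27) := by
    have h5 : 0.99 * τ * (1 - 2 * δ) * (Real.log (N:ℝ) - 0.27)
        ≤ a * (Real.log (N:ℝ) - 0.27) :=
      mul_le_mul_of_nonneg_right hca (by linarith)
    nlinarith
  have hnum : 0.99 * τ * (1 - 2 * δ) * Real.log (N:ℝ) ≤ k + 1.98 * Real.log 2 := by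
    nlinarith [hkge, hxa, hxa', hb'log, hmb, hmain, he, hlog2]
  -- final ENNReal packaging
  have hMI : mutualInfoBits μ = ENNReal.ofReal k / ENNReal.ofReal (Real.log 2) := by
    unfold mutualInfoBits mutualInfoE klDivE
    rw [hmarg, ← hQ, ← hν, if_pos (⟨hac, hint⟩ : μ ≪ ν ∧ Integrable
      (fun x => Real.log (μ.rnDeriv ν x).toReal) μ)]
  rw [hMI]
  rcases le_or_gt 0 k with hk0 | hk0
  · rw [← ENNReal.ofReal_div_of_pos hlog2pos,
      ← ENNReal.ofReal_add (by positivity) (by norm_num : (0:ℝ) ≤ 1.98)]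
    refine ENNReal.ofReal_le_ofReal ?_
    rw [← Real.log_div_log]
    have hdiv : (0.99 * τ * (1 - 2 * δ) * Real.log (N:ℝ)) / Real.log 2
        ≤ (k + 1.98 * Real.log 2) / Real.log 2 := by gcongr
    calc 0.99 * τ * (1 - 2 * δ) * (Real.log (N:ℝ) / Real.log 2)
        = (0.99 * τ * (1 - 2 * δ) * Real.log (N:ℝ)) / Real.log 2 := by ring
      _ ≤ (k + 1.98 * Real.log 2) / Real.log 2 := hdiv
      _ = k / Real.log 2 + 1.98 := by field_simp
  · have hLHS : 0.99 * τ * (1 - 2 * δ) * Real.logb 2 (N:ℝ) ≤ 1.98 := by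
      rw [← Real.log_div_log]
      have h5 : 0.99 * τ * (1 - 2 * δ) * Real.log (N:ℝ) ≤ 1.98 * Real.log 2 := by linarith
      calc 0.99 * τ * (1 - 2 * δ) * (Real.log (N:ℝ) / Real.log 2)
          = (0.99 * τ * (1 - 2 * δ) * Real.log (N:ℝ)) / Real.log 2 := by ring
        _ ≤ (1.98 * Real.log 2) / Real.log 2 := by gcongr
        _ = 1.98 := by field_simp
    exact le_trans (ENNReal.ofReal_le_ofReal hLHS) le_add_self


end
end

section
/- Let Q be the uniform distribution over an arbitrary finite set S ⊂ ℝⁿ. Let (x, x̂) be jointly distributed, where x ~ Q and x̂ takes values in an arbitrary countable subset of ℝⁿ, satisfying Pr[ ‖x − x̂‖ ≤ ε ] ≥ 1 − δ. Then for all τ ∈ (0,1): τ(1 − δ) · log cov_{2ε, δ + τ}(Q) ≤ I(x; x̂) + 2. -/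
open MeasureTheory ProbabilityTheory ENNReal
open scoped NNReal

noncomputable section

/-- Jensen-type lower bound for the set integral of the log of the Radon–Nikodym derivative. -/
lemma covAux_setIntegral_log_rnDeriv {α : Type*} [MeasurableSpace α] (μ ν : Measure α)
    [IsFiniteMeasure μ] [IsFiniteMeasure ν] (hac : μ ≪ ν)
    (hint : Integrable (fun x => Real.log (μ.rnDeriv ν x).toReal) μ)
    {A : Set α} (hA : MeasurableSet A) :
    (μ A).toReal * Real.log ((μ A).toReal / (ν A).toReal)
      ≤ ∫ x in A, Real.log (μ.rnDeriv ν x).toReal ∂μ := by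
  rcases eq_or_ne (μ A) 0 with h0 | h0
  · rw [Measure.restrict_eq_zero.mpr h0]
    simp [h0]
  have hν0 : ν A ≠ 0 := fun h => h0 (hac h)
  have ha : 0 < (μ A).toReal := ENNReal.toReal_pos h0 (measure_ne_top _ _)
  have hb : 0 < (ν A).toReal := ENNReal.toReal_pos hν0 (measure_ne_top _ _)
  set a := (μ A).toReal with ha'
  set b := (ν A).toReal with hb'
  set c := a / b with hc'
  have hc : 0 < c := div_pos ha hb
  -- a.e. positivity and finiteness of rnDeriv w.r.t. μ
  have hpos : ∀ᵐ x ∂μ, 0 < μ.rnDeriv ν x := Measure.rnDeriv_pos hac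
  have hlt : ∀ᵐ x ∂μ, μ.rnDeriv ν x < ⊤ := hac.ae_le (Measure.rnDeriv_lt_top μ ν)
  set φ : α → ℝ := fun x => ((μ.rnDeriv ν x)⁻¹).toReal with hφ'
  have hmeas : Measurable (μ.rnDeriv ν) := Measure.measurable_rnDeriv μ ν
  -- lintegral of the inverse
  have hres : μ.restrict A = (ν.restrict A).withDensity (μ.rnDeriv ν) := by
    conv_lhs => rw [← Measure.withDensity_rnDeriv_eq μ ν hac]
    exact restrict_withDensity hA _
  have hlin : ∫⁻ x in A, (μ.rnDeriv ν x)⁻¹ ∂μ ≤ ν A := by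
    have hwd := lintegral_withDensity_eq_lintegral_mul (ν.restrict A) hmeas hmeas.inv
    simp only [Pi.inv_apply] at hwd
    rw [hres, hwd]
    calc ∫⁻ x in A, (μ.rnDeriv ν * (μ.rnDeriv ν)⁻¹) x ∂ν
        ≤ ∫⁻ _ in A, 1 ∂ν := by
          refine lintegral_mono fun x => ?_
          simp only [Pi.mul_apply]
          exact ENNReal.mul_inv_le_one _
      _ = ν A := by simp
  have hφint : Integrable φ (μ.restrict A) := by
    refine integrable_toReal_of_lintegral_ne_top (hmeas.inv.aemeasurable) ?_
    exact ne_top_of_le_ne_top (measure_ne_top ν A) hlin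
  have hφval : ∫ x in A, φ x ∂μ ≤ b := by
    have h1 : ∫ x in A, φ x ∂μ = (∫⁻ x in A, (μ.rnDeriv ν x)⁻¹ ∂μ).toReal := by
      refine integral_toReal hmeas.inv.aemeasurable ?_
      refine ae_restrict_of_ae ?_
      filter_upwards [hpos] with x hx
      simp [ENNReal.inv_lt_top, hx]
    rw [h1]
    exact ENNReal.toReal_mono (measure_ne_top _ _) hlin
  -- pointwise bound
  have hpt : ∀ᵐ x ∂μ.restrict A,
      Real.log c + 1 - c * φ x ≤ Real.log (μ.rnDeriv ν x).toReal := by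
    refine ae_restrict_of_ae ?_
    filter_upwards [hpos, hlt] with x hx hx'
    set t := (μ.rnDeriv ν x).toReal with ht'
    have ht : 0 < t := ENNReal.toReal_pos hx.ne' hx'.ne
    have hφx : φ x = t⁻¹ := by simp [hφ', ht', ENNReal.toReal_inv]
    have := Real.log_le_sub_one_of_pos (div_pos hc ht)
    rw [Real.log_div hc.ne' ht.ne'] at this
    have hct : c / t = c * t⁻¹ := div_eq_mul_inv c t
    rw [hφx]
    nlinarith
  have hRint : Integrable (fun x => Real.log c + 1 - c * φ x) (μ.restrict A) :=
    (integrable_const _).sub (hφint.const_mul c)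
  have hmono : ∫ x in A, (Real.log c + 1 - c * φ x) ∂μ
      ≤ ∫ x in A, Real.log (μ.rnDeriv ν x).toReal ∂μ :=
    integral_mono_ae hRint hint.integrableOn hpt
  have hleft : ∫ x in A, (Real.log c + 1 - c * φ x) ∂μ
      = (Real.log c + 1) * a - c * ∫ x in A, φ x ∂μ := by
    rw [integral_sub (integrable_const _) (hφint.const_mul c), integral_const,
      integral_const_mul]
    simp [ha', smul_eq_mul, mul_comm, measureReal_def]
  have : a * Real.log c ≤ ∫ x in A, Real.log (μ.rnDeriv ν x).toReal ∂μ := by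
    have hcb : c * b = a := by rw [hc', div_mul_cancel₀ a hb.ne']
    nlinarith [mul_le_mul_of_nonneg_left hφval (le_of_lt hc)]
  exact this

/-- Binary entropy bound. -/
lemma covAux_binEntropy (a b : ℝ) (ha : 0 ≤ a) (hb : 0 ≤ b) :
    -((a + b) * Real.log 2) ≤ a * Real.log (a / (a + b)) + b * Real.log (b / (a + b)) := by
  have key : ∀ x m : ℝ, 0 < x → 0 < m → x - m / 2 - x * Real.log 2 ≤ x * Real.log (x / m) := by
    intro x m hx hm
    have h2x : (0:ℝ) < 2 * x / m := by positivity
    have h1 := Real.log_le_sub_one_of_pos (show (0:ℝ) < m / (2 * x) by positivity)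
    have hinv : Real.log (m / (2 * x)) = - Real.log (2 * x / m) := by
      rw [← Real.log_inv]; congr 1; field_simp
    rw [hinv] at h1
    -- log (x/m) = log (2x/m) - log 2
    have hsplit : Real.log (x / m) = Real.log (2 * x / m) - Real.log 2 := by
      rw [← Real.log_div h2x.ne' (by norm_num)]
      congr 1; field_simp
    rw [hsplit]
    have h3 : 1 - m / (2 * x) ≤ Real.log (2 * x / m) := by nlinarith
    have h4 : x * (1 - m / (2 * x)) ≤ x * Real.log (2 * x / m) :=
      mul_le_mul_of_nonneg_left h3 hx.le
    have h5 : x * (1 - m / (2 * x)) = x - m / 2 := by field_simp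
    nlinarith
  rcases eq_or_lt_of_le ha with rfl | ha'
  · rcases eq_or_lt_of_le hb with rfl | hb'
    · norm_num
    · have : b / (0 + b) = 1 := by rw [zero_add]; exact div_self hb'.ne'
      rw [this]
      simp only [zero_add, Real.log_one, mul_zero, zero_mul, add_zero, zero_mul, neg_nonpos]
      positivity
  rcases eq_or_lt_of_le hb with rfl | hb'
  · have : a / (a + 0) = 1 := by rw [add_zero]; exact div_self ha'.ne'
    rw [this]
    simp only [add_zero, Real.log_one, mul_zero, zero_mul, add_zero, neg_nonpos]
    positivity
  have hm : 0 < a + b := by linarith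
  have k1 := key a (a + b) ha' hm
  have k2 := key b (a + b) hb' hm
  nlinarith

/-- Per-cell real inequality. -/
lemma covAux_percell (a b na nb m s L : ℝ) (ha : 0 ≤ a) (hb : 0 ≤ b) (hab : a + b = m)
    (hs : 0 < s) (hL : L = -Real.log s) (hna : na ≤ s * m) (hnb : nb ≤ m)
    (hna0 : na = 0 → a = 0) (hnb0 : nb = 0 → b = 0) (hna' : 0 ≤ na) (hnb' : 0 ≤ nb) :
    a * L - m * Real.log 2 ≤ a * Real.log (a / na) + b * Real.log (b / nb) := by
  have step1 : a * Real.log (a / (s * m)) ≤ a * Real.log (a / na) := by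
    rcases eq_or_lt_of_le ha with rfl | ha'
    · simp
    have hna2 : 0 < na := by
      rcases eq_or_lt_of_le hna' with h | h
      · exact absurd (hna0 h.symm) ha'.ne'
      · exact h
    have hsm : 0 < s * m := lt_of_lt_of_le hna2 hna
    refine mul_le_mul_of_nonneg_left ?_ ha
    exact Real.log_le_log (by positivity) (by gcongr)
  have step2 : b * Real.log (b / m) ≤ b * Real.log (b / nb) := by
    rcases eq_or_lt_of_le hb with rfl | hb'
    · simp
    have hnb2 : 0 < nb := by
      rcases eq_or_lt_of_le hnb' with h | h
      · exact absurd (hnb0 h.symm) hb'.ne'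
      · exact h
    have hm : 0 < m := by linarith
    refine mul_le_mul_of_nonneg_left ?_ hb
    exact Real.log_le_log (by positivity) (by gcongr)
  have step3 : a * Real.log (a / (s * m)) = a * Real.log (a / m) + a * L := by
    rcases eq_or_lt_of_le ha with rfl | ha'
    · simp
    have hm : 0 < m := by linarith
    have : a / (s * m) = (a / m) * s⁻¹ := by
      rw [mul_comm s m, ← div_div, div_eq_mul_inv (a / m)]
    rw [this, Real.log_mul (by positivity) (by positivity), Real.log_inv, hL]
    ring
  have step4 : -(m * Real.log 2) ≤ a * Real.log (a / m) + b * Real.log (b / m) := by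
    have := covAux_binEntropy a b ha hb
    rw [hab] at this
    exact this
  linarith


set_option maxHeartbeats 1000000

/-- **Fano-type covering bound, uniform case** (`lemma: covering uniform`).
`x` is uniform on a finite set `S`, `x̂` takes countably many values, and
`Pr[‖x - x̂‖ ≤ ε] ≥ 1 - δ`.  Then for all `τ ∈ (0,1)`:
`τ (1-δ) log cov_{2ε, δ+τ}(Q) ≤ I(x; x̂) + 2` (information measured in bits). -/
theorem covering_uniform (n : ℕ) (S : Finset (EucSp n)) (hS : S.Nonempty)
    (Q : Measure (EucSp n))
    (hQ : Q = (S.card : ℝ≥0∞)⁻¹ • ∑ a ∈ S, Measure.dirac a)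
    (μ : Measure (EucSp n × EucSp n)) (hμ : IsProbabilityMeasure μ)
    (hmarg : μ.map Prod.fst = Q)
    (D : Set (EucSp n)) (hD : D.Countable) (hsupp : (μ.map Prod.snd) Dᶜ = 0)
    (ε δ : ℝ)
    (herr : ENNReal.ofReal (1 - δ) ≤ μ {q | ‖q.1 - q.2‖ ≤ ε}) :
    ∀ τ : ℝ, 0 < τ → τ < 1 →
      ENNReal.ofReal (τ * (1 - δ) * Real.logb 2 (covNum Q (2 * ε) (δ + τ)))
        ≤ mutualInfoBits μ + ENNReal.ofReal 2 := by
  classical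
  intro τ hτ0 hτ1
  -- trivial case: covering number ≤ 1
  by_cases hk1 : covNum Q (2 * ε) (δ + τ) ≤ 1
  · have hlog : Real.logb 2 ((covNum Q (2 * ε) (δ + τ) : ℕ) : ℝ) = 0 := by
      rcases Nat.le_one_iff_eq_zero_or_eq_one.mp hk1 with h | h <;> rw [h] <;> simp
    rw [hlog, mul_zero, ENNReal.ofReal_zero]
    exact zero_le
  push_neg at hk1
  set k := covNum Q (2 * ε) (δ + τ) with hkdef
  have hQprob : IsProbabilityMeasure Q := by
    rw [← hmarg]; exact Measure.isProbabilityMeasure_map measurable_fst.aemeasurable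
  -- δ ≥ 0
  have hδ0 : 0 ≤ δ := by
    have h1 : μ {q : EucSp n × EucSp n | ‖q.1 - q.2‖ ≤ ε} ≤ 1 := prob_le_one
    have := ENNReal.ofReal_le_one.mp (herr.trans h1)
    linarith
  -- δ < 1 (otherwise LHS is 0)
  by_cases hδ1 : 1 ≤ δ
  · have hlogk : 0 ≤ Real.logb 2 ((k : ℕ) : ℝ) :=
      Real.logb_nonneg (by norm_num) (by exact_mod_cast hk1.le)
    have h1 : (1 - δ) * Real.logb 2 ((k : ℕ) : ℝ) ≤ 0 :=
      mul_nonpos_iff.mpr (Or.inr ⟨by linarith, hlogk⟩)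
    have hnp : τ * (1 - δ) * Real.logb 2 ((k : ℕ) : ℝ) ≤ 0 := by
      have h2 : τ * ((1 - δ) * Real.logb 2 ((k : ℕ) : ℝ)) ≤ 0 :=
        mul_nonpos_iff.mpr (Or.inl ⟨hτ0.le, h1⟩)
      linarith [h2, (by ring : τ * (1 - δ) * Real.logb 2 ((k : ℕ) : ℝ)
        = τ * ((1 - δ) * Real.logb 2 ((k : ℕ) : ℝ)))]
    rw [ENNReal.ofReal_eq_zero.mpr hnp]
    exact zero_le
  push_neg at hδ1
  -- ε ≥ 0
  have hε : 0 ≤ ε := by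
    by_contra h
    push_neg at h
    have hempty : {q : EucSp n × EucSp n | ‖q.1 - q.2‖ ≤ ε} = ∅ := by
      ext q
      simp only [Set.mem_setOf_eq, Set.mem_empty_iff_false, iff_false, not_le]
      exact lt_of_lt_of_le h (norm_nonneg _)
    rw [hempty, measure_empty, nonpos_iff_eq_zero, ENNReal.ofReal_eq_zero] at herr
    linarith
  -- δ + τ < 1
  have hδτ : δ + τ < 1 := by
    by_contra h
    push_neg at h
    have h0 : (0:ℕ) ∈ {j : ℕ | ∃ s : Finset (EucSp n), s.card = j ∧
        ENNReal.ofReal (1 - (δ + τ)) ≤ Q (⋃ x ∈ s, Metric.closedBall x (2 * ε))} :=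
      ⟨∅, rfl, by simp [ENNReal.ofReal_eq_zero.mpr (by linarith : 1 - (δ + τ) ≤ 0)]⟩
    have hle : k ≤ 0 := by rw [hkdef, covNum]; exact Nat.sInf_le h0
    omega
  -- any < k balls of radius ε cover mass < 1 - (δ+τ)
  have hcov : ∀ G : Finset (EucSp n), G.card < k →
      Q (⋃ c ∈ G, Metric.closedBall c ε) < ENNReal.ofReal (1 - (δ + τ)) := by
    intro G hG
    by_contra h
    push_neg at h
    have h2 : ENNReal.ofReal (1 - (δ + τ)) ≤ Q (⋃ c ∈ G, Metric.closedBall c (2 * ε)) := by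
      refine h.trans (measure_mono ?_)
      exact Set.iUnion₂_mono fun c _ => Metric.closedBall_subset_closedBall (by linarith)
    have hle : k ≤ G.card := by rw [hkdef, covNum]; exact Nat.sInf_le ⟨G, rfl, h2⟩
    omega
  -- greedy construction of an almost-covering family inside D
  have hσ0 : ((k - 1 : ℕ) : ℝ≥0∞) ≠ 0 := by
    simp only [ne_eq, Nat.cast_eq_zero]
    omega
  have hbuild : ∃ F : Finset (EucSp n), ↑F ⊆ D ∧ F.card < k ∧
      ∀ v ∈ D, Q (Metric.closedBall v ε \ ⋃ c ∈ F, Metric.closedBall c ε)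
        ≤ ((k - 1 : ℕ) : ℝ≥0∞)⁻¹ := by
    by_contra hbad
    push_neg at hbad
    have hstep : ∀ j : ℕ, j ≤ k - 1 → ∃ F : Finset (EucSp n), ↑F ⊆ D ∧ F.card = j ∧
        (j : ℝ≥0∞) * ((k - 1 : ℕ) : ℝ≥0∞)⁻¹ ≤ Q (⋃ c ∈ F, Metric.closedBall c ε) := by
      intro j
      induction j with
      | zero => exact fun _ => ⟨∅, by simp, rfl, by simp⟩
      | succ j ih =>
        intro hj
        obtain ⟨F, hFD, hFcard, hFQ⟩ := ih (by omega)
        obtain ⟨v, hvD, hv⟩ := hbad F hFD (by omega)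
        have hvF : v ∉ F := by
          intro hvF
          have hdempty : Metric.closedBall v ε \ ⋃ c ∈ F, Metric.closedBall c ε = ∅ :=
            Set.diff_eq_empty.mpr (fun x hx => Set.mem_biUnion hvF hx)
          rw [hdempty, measure_empty] at hv
          exact (not_lt.mpr zero_le) hv
        refine ⟨insert v F, ?_, by rw [Finset.card_insert_of_notMem hvF, hFcard], ?_⟩
        · rw [Finset.coe_insert]
          exact Set.insert_subset hvD hFD
        · have hunion : (⋃ c ∈ insert v F, Metric.closedBall c ε)
              = (⋃ c ∈ F, Metric.closedBall c ε) ∪ Metric.closedBall v ε := by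
            simp only [Finset.set_biUnion_insert]
            exact Set.union_comm _ _
          have hmeasd : MeasurableSet
              (Metric.closedBall v ε \ ⋃ c ∈ F, Metric.closedBall c ε) :=
            measurableSet_closedBall.diff
              (F.measurableSet_biUnion fun c _ => measurableSet_closedBall)
          have hQu : Q ((⋃ c ∈ F, Metric.closedBall c ε) ∪ Metric.closedBall v ε)
              = Q (⋃ c ∈ F, Metric.closedBall c ε)
                + Q (Metric.closedBall v ε \ ⋃ c ∈ F, Metric.closedBall c ε) := by
            rw [← Set.union_diff_self]
            exact measure_union Set.disjoint_sdiff_right hmeasd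
          rw [hunion, hQu]
          have hcast : ((j + 1 : ℕ) : ℝ≥0∞) * ((k - 1 : ℕ) : ℝ≥0∞)⁻¹
              = (j : ℝ≥0∞) * ((k - 1 : ℕ) : ℝ≥0∞)⁻¹ + ((k - 1 : ℕ) : ℝ≥0∞)⁻¹ := by
            push_cast
            ring
          rw [hcast]
          exact add_le_add hFQ hv.le
    obtain ⟨F, hFD, hFcard, hFQ⟩ := hstep (k - 1) le_rfl
    have h1 : ((k - 1 : ℕ) : ℝ≥0∞) * ((k - 1 : ℕ) : ℝ≥0∞)⁻¹ = 1 :=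
      ENNReal.mul_inv_cancel hσ0 (ENNReal.natCast_ne_top _)
    rw [h1] at hFQ
    have h2 := hcov F (by omega)
    have h3 : ENNReal.ofReal (1 - (δ + τ)) ≤ 1 := ENNReal.ofReal_le_one.mpr (by linarith)
    exact lt_irrefl (1 : ℝ≥0∞) (lt_of_le_of_lt hFQ (lt_of_lt_of_le h2 h3))
  obtain ⟨F, hFD, hFcard, hFcover⟩ := hbuild
  set U : Set (EucSp n) := ⋃ c ∈ F, Metric.closedBall c ε with hUdef
  have hUmeas : MeasurableSet U :=
    F.measurableSet_biUnion fun c _ => measurableSet_closedBall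
  -- the product reference measure
  set ν : Measure (EucSp n × EucSp n) := (μ.map Prod.fst).prod (μ.map Prod.snd) with hνdef
  haveI hPfst : IsProbabilityMeasure (μ.map Prod.fst) :=
    Measure.isProbabilityMeasure_map measurable_fst.aemeasurable
  haveI hPsnd : IsProbabilityMeasure (μ.map Prod.snd) :=
    Measure.isProbabilityMeasure_map measurable_snd.aemeasurable
  haveI hPν : IsProbabilityMeasure ν := by rw [hνdef]; infer_instance
  rw [mutualInfoBits, mutualInfoE, klDivE]
  rw [← hνdef]
  split_ifs with hif
  swap
  · have htop : (⊤ : ℝ≥0∞) / ENNReal.ofReal (Real.log 2) = ⊤ :=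
      ENNReal.div_eq_top.mpr (Or.inr ⟨rfl, ENNReal.ofReal_ne_top⟩)
    rw [htop]
    simp
  obtain ⟨hac, hint⟩ := hif
  set f : EucSp n × EucSp n → ℝ := fun p => Real.log ((μ.rnDeriv ν p).toReal) with hfdef
  set I : ℝ := ∫ p, f p ∂μ with hIdef
  -- countable index
  haveI : Countable ↥D := hD.to_subtype
  set Bd : EucSp n → Set (EucSp n) := fun v => Metric.closedBall v ε \ U with hBddef
  have hBdmeas : ∀ v, MeasurableSet (Bd v) := fun v =>
    measurableSet_closedBall.diff hUmeas
  set 𝒜 : ↥D → Set (EucSp n × EucSp n) := fun v => (Bd ↑v) ×ˢ ({(v : EucSp n)} : Set (EucSp n))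
    with h𝒜def
  set ℬ : ↥D → Set (EucSp n × EucSp n) := fun v => (Bd ↑v)ᶜ ×ˢ ({(v : EucSp n)} : Set (EucSp n))
    with hℬdef
  set 𝒞 : ↥D → Set (EucSp n × EucSp n) :=
    fun v => (Set.univ : Set (EucSp n)) ×ˢ ({(v : EucSp n)} : Set (EucSp n)) with h𝒞def
  have h𝒜meas : ∀ v, MeasurableSet (𝒜 v) := fun v =>
    (hBdmeas _).prod (measurableSet_singleton _)
  have hℬmeas : ∀ v, MeasurableSet (ℬ v) := fun v =>
    (hBdmeas _).compl.prod (measurableSet_singleton _)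
  have h𝒞meas : ∀ v, MeasurableSet (𝒞 v) := fun v =>
    MeasurableSet.univ.prod (measurableSet_singleton _)
  have h𝒜disj : Pairwise (Function.onFun Disjoint 𝒜) := by
    intro v w hvw
    refine Set.disjoint_left.mpr ?_
    rintro ⟨x, y⟩ ⟨-, hy⟩ ⟨-, hy'⟩
    exact hvw (Subtype.ext (by
      simp only [Set.mem_singleton_iff] at hy hy'
      rw [← hy, ← hy']))
  have h𝒞disj : Pairwise (Function.onFun Disjoint 𝒞) := by
    intro v w hvw
    refine Set.disjoint_left.mpr ?_
    rintro ⟨x, y⟩ ⟨-, hy⟩ ⟨-, hy'⟩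
    exact hvw (Subtype.ext (by
      simp only [Set.mem_singleton_iff] at hy hy'
      rw [← hy, ← hy']))
  -- μ lives on the union of the 𝒞 cells
  have hUnionC : (⋃ v, 𝒞 v) = Prod.snd ⁻¹' D := by
    ext p
    simp only [h𝒞def, Set.mem_iUnion, Set.mem_prod, Set.mem_univ, true_and,
      Set.mem_singleton_iff, Set.mem_preimage]
    exact ⟨fun ⟨v, hv⟩ => hv ▸ v.2, fun hp => ⟨⟨p.2, hp⟩, rfl⟩⟩
  have hDcomp : μ ((Prod.snd ⁻¹' D)ᶜ) = 0 := by
    rw [← Set.preimage_compl, ← Measure.map_apply measurable_snd hD.measurableSet.compl]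
    exact hsupp
  have hRes : μ.restrict (⋃ v, 𝒞 v) = μ := by
    rw [hUnionC]
    refine Measure.restrict_eq_self_of_ae_mem ?_
    rw [ae_iff]
    have hco : {p : EucSp n × EucSp n | ¬ p ∈ Prod.snd ⁻¹' D} = (Prod.snd ⁻¹' D)ᶜ := rfl
    rw [hco]
    exact hDcomp
  -- sums
  have hSum1 : HasSum (fun v => ∫ p in 𝒞 v, f p ∂μ) I := by
    have h := hasSum_integral_iUnion h𝒞meas h𝒞disj hint.integrableOn
    rwa [hRes, ← hIdef] at h
  have hSumA : HasSum (fun v => (μ (𝒜 v)).toReal) ((μ (⋃ v, 𝒜 v)).toReal) := by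
    have h := hasSum_integral_iUnion (f := fun _ => (1:ℝ)) h𝒜meas h𝒜disj
      (integrable_const (μ := μ) (1:ℝ)).integrableOn
    simpa [setIntegral_const, measureReal_def] using h
  have hSumC : HasSum (fun v => (μ (𝒞 v)).toReal) ((μ (⋃ v, 𝒞 v)).toReal) := by
    have h := hasSum_integral_iUnion (f := fun _ => (1:ℝ)) h𝒞meas h𝒞disj
      (integrable_const (μ := μ) (1:ℝ)).integrableOn
    simpa [setIntegral_const, measureReal_def] using h
  set M : ℝ := (μ (⋃ v, 𝒜 v)).toReal with hMdef
  set Mc : ℝ := (μ (⋃ v, 𝒞 v)).toReal with hMcdef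
  set s₀ : ℝ := (((k - 1 : ℕ) : ℝ))⁻¹ with hs₀def
  have hk1R : (1:ℝ) ≤ ((k - 1 : ℕ) : ℝ) := by exact_mod_cast (by omega : 1 ≤ k - 1)
  have hs₀pos : 0 < s₀ := by rw [hs₀def]; positivity
  set L : ℝ := Real.log ((k - 1 : ℕ) : ℝ) with hLdef
  have hL0 : 0 ≤ L := Real.log_nonneg hk1R
  have hLs : L = -Real.log s₀ := by rw [hs₀def, Real.log_inv]; ring
  -- termwise bound
  have hterm : ∀ v : ↥D,
      (μ (𝒜 v)).toReal * L - (μ (𝒞 v)).toReal * Real.log 2 ≤ ∫ p in 𝒞 v, f p ∂μ := by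
    intro v
    have hsplitC : 𝒞 v = 𝒜 v ∪ ℬ v := by
      rw [h𝒞def, h𝒜def, hℬdef, ← Set.union_prod, Set.union_compl_self]
    have hdisjAB : Disjoint (𝒜 v) (ℬ v) := by
      refine Set.disjoint_left.mpr ?_
      rintro ⟨x, y⟩ ⟨hx, -⟩ ⟨hx', -⟩
      exact hx' hx
    have hIntSplit : ∫ p in 𝒞 v, f p ∂μ = (∫ p in 𝒜 v, f p ∂μ) + ∫ p in ℬ v, f p ∂μ := by
      rw [hsplitC]
      exact setIntegral_union hdisjAB (hℬmeas v) hint.integrableOn hint.integrableOn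
    have hJA := covAux_setIntegral_log_rnDeriv μ ν hac hint (h𝒜meas v)
    have hJB := covAux_setIntegral_log_rnDeriv μ ν hac hint (hℬmeas v)
    have hμab : μ (𝒞 v) = μ (𝒜 v) + μ (ℬ v) := by
      rw [hsplitC]
      exact measure_union hdisjAB (hℬmeas v)
    have hw : μ (𝒞 v) = (μ.map Prod.snd) {(v : EucSp n)} := by
      have hpre : Prod.snd ⁻¹' ({(v : EucSp n)} : Set (EucSp n)) = 𝒞 v := by
        rw [h𝒞def]
        ext p
        simp only [Set.mem_preimage, Set.mem_singleton_iff, Set.mem_prod, Set.mem_univ,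
          true_and]
      rw [Measure.map_apply measurable_snd (measurableSet_singleton _), hpre]
    have hνA : ν (𝒜 v) = Q (Bd ↑v) * (μ.map Prod.snd) {(v : EucSp n)} := by
      rw [hνdef, h𝒜def, Measure.prod_prod, hmarg]
    have hνB : ν (ℬ v) = Q ((Bd ↑v)ᶜ) * (μ.map Prod.snd) {(v : EucSp n)} := by
      rw [hνdef, hℬdef, Measure.prod_prod, hmarg]
    have hQBd : (Q (Bd ↑v)).toReal ≤ s₀ := by
      have h1 : Q (Bd ↑v) ≤ ((k - 1 : ℕ) : ℝ≥0∞)⁻¹ := hFcover ↑v v.2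
      have h2 := ENNReal.toReal_mono (ENNReal.inv_ne_top.mpr hσ0) h1
      rwa [ENNReal.toReal_inv, ENNReal.toReal_natCast] at h2
    have happ := covAux_percell (μ (𝒜 v)).toReal (μ (ℬ v)).toReal
        (ν (𝒜 v)).toReal (ν (ℬ v)).toReal (μ (𝒞 v)).toReal s₀ L
        ENNReal.toReal_nonneg ENNReal.toReal_nonneg
        (by rw [hμab, ENNReal.toReal_add (measure_ne_top _ _) (measure_ne_top _ _)])
        hs₀pos hLs
        (by
          rw [hνA, hw, ENNReal.toReal_mul]
          exact mul_le_mul_of_nonneg_right hQBd ENNReal.toReal_nonneg)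
        (by
          rw [hνB, hw, ENNReal.toReal_mul]
          have : (Q ((Bd ↑v)ᶜ)).toReal ≤ 1 := by
            have := ENNReal.toReal_mono (by simp) (prob_le_one (μ := Q) (s := (Bd ↑v)ᶜ))
            simpa using this
          nlinarith [ENNReal.toReal_nonneg (a := (μ.map Prod.snd) {(v : EucSp n)})])
        (by
          intro h0
          have : ν (𝒜 v) = 0 := by
            have := (ENNReal.toReal_eq_zero_iff _).mp h0
            rcases this with h | h
            · exact h
            · exact absurd h (measure_ne_top _ _)
          rw [hac this]
          simp)
        (by
          intro h0
          have : ν (ℬ v) = 0 := by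
            have := (ENNReal.toReal_eq_zero_iff _).mp h0
            rcases this with h | h
            · exact h
            · exact absurd h (measure_ne_top _ _)
          rw [hac this]
          simp)
        ENNReal.toReal_nonneg ENNReal.toReal_nonneg
    rw [hIntSplit]
    calc (μ (𝒜 v)).toReal * L - (μ (𝒞 v)).toReal * Real.log 2
        ≤ (μ (𝒜 v)).toReal * Real.log ((μ (𝒜 v)).toReal / (ν (𝒜 v)).toReal)
          + (μ (ℬ v)).toReal * Real.log ((μ (ℬ v)).toReal / (ν (ℬ v)).toReal) := happ
      _ ≤ (∫ p in 𝒜 v, f p ∂μ) + ∫ p in ℬ v, f p ∂μ := add_le_add hJA hJB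
  -- summed bound
  have hgsum : HasSum (fun v => (μ (𝒜 v)).toReal * L - (μ (𝒞 v)).toReal * Real.log 2)
      (M * L - Mc * Real.log 2) := (hSumA.mul_right L).sub (hSumC.mul_right _)
  have hIbound : M * L - Mc * Real.log 2 ≤ I := hasSum_le hterm hgsum hSum1
  -- lower bound on M
  have hQU : Q U < ENNReal.ofReal (1 - (δ + τ)) := hcov F hFcard
  have hsub : {q : EucSp n × EucSp n | ‖q.1 - q.2‖ ≤ ε}
      ⊆ ((⋃ v, 𝒜 v) ∪ Prod.fst ⁻¹' U) ∪ (Prod.snd ⁻¹' D)ᶜ := by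
    rintro ⟨x, y⟩ hxy
    simp only [Set.mem_setOf_eq] at hxy
    by_cases hyD : y ∈ D
    · by_cases hxU : x ∈ U
      · exact Or.inl (Or.inr hxU)
      · refine Or.inl (Or.inl (Set.mem_iUnion.mpr ⟨⟨y, hyD⟩, ?_⟩))
        exact ⟨⟨Metric.mem_closedBall.mpr (by rw [dist_eq_norm]; exact hxy), hxU⟩, rfl⟩
    · exact Or.inr hyD
  have hfstU : μ (Prod.fst ⁻¹' U) = Q U := by
    rw [← hmarg, Measure.map_apply measurable_fst hUmeas]
  have hchain : ENNReal.ofReal (1 - δ) ≤ μ (⋃ v, 𝒜 v) + ENNReal.ofReal (1 - (δ + τ)) := by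
    calc ENNReal.ofReal (1 - δ) ≤ μ {q : EucSp n × EucSp n | ‖q.1 - q.2‖ ≤ ε} := herr
      _ ≤ μ (((⋃ v, 𝒜 v) ∪ Prod.fst ⁻¹' U) ∪ (Prod.snd ⁻¹' D)ᶜ) := measure_mono hsub
      _ ≤ μ ((⋃ v, 𝒜 v) ∪ Prod.fst ⁻¹' U) + μ ((Prod.snd ⁻¹' D)ᶜ) := measure_union_le _ _
      _ = μ ((⋃ v, 𝒜 v) ∪ Prod.fst ⁻¹' U) := by rw [hDcomp, add_zero]
      _ ≤ μ (⋃ v, 𝒜 v) + μ (Prod.fst ⁻¹' U) := measure_union_le _ _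
      _ ≤ μ (⋃ v, 𝒜 v) + ENNReal.ofReal (1 - (δ + τ)) := by
          rw [hfstU]
          exact add_le_add le_rfl hQU.le
  have hM : τ ≤ M := by
    have h1 : ENNReal.ofReal (1 - δ) - ENNReal.ofReal (1 - (δ + τ)) ≤ μ (⋃ v, 𝒜 v) :=
      tsub_le_iff_right.mpr hchain
    rw [← ENNReal.ofReal_sub _ (by linarith : (0:ℝ) ≤ 1 - (δ + τ))] at h1
    have heq : 1 - δ - (1 - (δ + τ)) = τ := by ring
    rw [heq] at h1
    have h2 := ENNReal.toReal_mono (measure_ne_top _ _) h1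
    rw [hMdef]
    rwa [ENNReal.toReal_ofReal hτ0.le] at h2
  have hMc : Mc ≤ 1 := by
    have h := ENNReal.toReal_mono one_ne_top (prob_le_one (μ := μ) (s := ⋃ v, 𝒞 v))
    rw [ENNReal.toReal_one] at h
    exact hMcdef ▸ h
  have hlog2 : 0 < Real.log 2 := Real.log_pos one_lt_two
  have hIlow : τ * L - Real.log 2 ≤ I := by
    have h1 : τ * L ≤ M * L := mul_le_mul_of_nonneg_right hM hL0
    have h2 : Mc * Real.log 2 ≤ 1 * Real.log 2 := mul_le_mul_of_nonneg_right hMc hlog2.le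
    nlinarith
  -- final real inequality
  have hkR : (1:ℝ) ≤ (k : ℝ) := by exact_mod_cast hk1.le
  have hlogknn : 0 ≤ Real.log (k : ℝ) := Real.log_nonneg hkR
  have hlogdiff : Real.log ((k : ℕ) : ℝ) ≤ L + Real.log 2 := by
    rw [hLdef, ← Real.log_mul (by positivity) (by norm_num)]
    apply Real.log_le_log (by linarith)
    have hcast : ((k - 1 : ℕ) : ℝ) = (k : ℝ) - 1 := by
      push_cast [Nat.cast_sub (by omega : 1 ≤ k)]
      ring
    rw [hcast]
    have : (2:ℝ) ≤ (k : ℝ) := by exact_mod_cast hk1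
    nlinarith
  have hreal : τ * (1 - δ) * Real.logb 2 ((k : ℕ) : ℝ) ≤ I / Real.log 2 + 2 := by
    have h1 : τ * (1 - δ) * Real.log ((k : ℕ) : ℝ) ≤ τ * Real.log ((k : ℕ) : ℝ) := by
      nlinarith [mul_nonneg (mul_nonneg hτ0.le hδ0) hlogknn]
    have h2 : τ * Real.log ((k : ℕ) : ℝ) ≤ τ * L + Real.log 2 := by
      have ha := mul_le_mul_of_nonneg_left hlogdiff hτ0.le
      have hb : τ * Real.log 2 ≤ 1 * Real.log 2 := mul_le_mul_of_nonneg_right hτ1.le hlog2.le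
      nlinarith
    have hfinal : τ * (1 - δ) * Real.log ((k : ℕ) : ℝ) ≤ I + 2 * Real.log 2 := by linarith
    rw [Real.logb]
    calc τ * (1 - δ) * (Real.log ((k : ℕ) : ℝ) / Real.log 2)
        = (τ * (1 - δ) * Real.log ((k : ℕ) : ℝ)) / Real.log 2 := by ring
      _ ≤ (I + 2 * Real.log 2) / Real.log 2 := by gcongr
      _ = I / Real.log 2 + 2 := by field_simp
  calc ENNReal.ofReal (τ * (1 - δ) * Real.logb 2 ((k : ℕ) : ℝ))
      ≤ ENNReal.ofReal (I / Real.log 2 + 2) := ENNReal.ofReal_le_ofReal hreal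
    _ ≤ ENNReal.ofReal (I / Real.log 2) + ENNReal.ofReal 2 := ENNReal.ofReal_add_le
    _ = ENNReal.ofReal I / ENNReal.ofReal (Real.log 2) + ENNReal.ofReal 2 := by
        rw [ENNReal.ofReal_div_of_pos hlog2]


end
end
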